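/- arXiv:2211.09181 — 4 statements merged into one kernel-verified Lean document; each statement's English description precedes it below -/
import Mathlib

section
/- For every real number c > 0 and every integer α ≥ 2, the Cauchy principal value PV ∫₀^∞ e^{−u/c}/(1 − u^α) du exists (i.e. the limit as ε → 0⁺ of ∫₀^{1−ε} e^{−u/c}/(1 − u^α) du + ∫_{1+ε}^∞ e^{−u/c}/(1 − u^α) du exists as a finite real number) and is strictly positive. -/
open MeasureTheory Set Filter

namespace PVAux

/-- The integrand. -/
noncomputable def f (c : ℝ) (α : ℕ) (u : ℝ) : ℝ := Real.exp (-u / c) / (1 - u ^ α)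

lemma f_meas (c : ℝ) (α : ℕ) : Measurable (f c α) :=
  (Real.measurable_exp.comp (measurable_id.neg.div_const c)).div
    (measurable_const.sub (measurable_id.pow_const α))

lemma f_contOn (c : ℝ) (α : ℕ) {s : Set ℝ} (hs : ∀ u ∈ s, (1:ℝ) - u ^ α ≠ 0) :
    ContinuousOn (f c α) s :=
  ((Real.continuous_exp.comp (continuous_id.neg.div_const c)).continuousOn).div
    ((continuous_const.sub (continuous_pow α)).continuousOn) hs

lemma denom_pos {α : ℕ} (hα : 1 ≤ α) {u : ℝ} (h0 : 0 ≤ u) (h1 : u < 1) :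
    0 < 1 - u ^ α := by
  have : u ^ α < 1 := pow_lt_one₀ h0 h1 (by omega)
  linarith

lemma f_contOn_Icc (c : ℝ) {α : ℕ} (hα : 1 ≤ α) {r : ℝ} (hr0 : 0 ≤ r) (hr1 : r < 1) :
    ContinuousOn (f c α) (Icc 0 r) := by
  refine f_contOn c α fun u hu => ?_
  have := denom_pos hα hu.1 (lt_of_le_of_lt hu.2 hr1)
  linarith

lemma f_contOn_Icc' (c : ℝ) {α : ℕ} (hα : 1 ≤ α) {a b : ℝ} (ha : 1 < a) :
    ContinuousOn (f c α) (Icc a b) := by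
  refine f_contOn c α fun u hu => ?_
  have h1u : 1 < u := lt_of_lt_of_le ha hu.1
  have : 1 < u ^ α := one_lt_pow₀ h1u (by omega)
  linarith

lemma f_integrableOn_Ioi (c : ℝ) (hc : 0 < c) {α : ℕ} (hα : 2 ≤ α) {a : ℝ} (ha : 1 < a) :
    IntegrableOn (f c α) (Ioi a) := by
  have ha0 : 0 < a := lt_trans one_pos ha
  have haα : 1 < a ^ α := one_lt_pow₀ ha (by omega)
  have hg : IntegrableOn (fun u : ℝ => (a ^ α - 1)⁻¹ * Real.exp (-c⁻¹ * u)) (Ioi a) :=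
    (exp_neg_integrableOn_Ioi a (by positivity)).const_mul _
  refine hg.mono' ((f_meas c α).aestronglyMeasurable.restrict) ?_
  filter_upwards [ae_restrict_mem measurableSet_Ioi] with u hu
  have h1u : 1 < u := lt_trans ha hu
  have huα : a ^ α ≤ u ^ α := pow_le_pow_left₀ ha0.le (le_of_lt hu) α
  have huα1 : 1 < u ^ α := lt_of_lt_of_le haα huα
  have : ‖f c α u‖ = Real.exp (-u / c) / (u ^ α - 1) := by
    rw [f, Real.norm_eq_abs, abs_div, abs_of_pos (Real.exp_pos _), abs_of_neg (by linarith : (1:ℝ) - u ^ α < 0)]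
    ring_nf
  rw [this]
  have hle : Real.exp (-u / c) / (u ^ α - 1) ≤ Real.exp (-u / c) / (a ^ α - 1) := by
    apply div_le_div_of_nonneg_left (Real.exp_pos _).le (by linarith) (by linarith)
  calc Real.exp (-u / c) / (u ^ α - 1) ≤ Real.exp (-u / c) / (a ^ α - 1) := hle
    _ = (a ^ α - 1)⁻¹ * Real.exp (-c⁻¹ * u) := by
        rw [show -u / c = -c⁻¹ * u by ring, div_eq_inv_mul]



noncomputable def M0 (α : ℕ) : ℝ := ∑ k ∈ Finset.range α, (k : ℝ) * (3/2) ^ k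

lemma M0_nonneg (α : ℕ) : 0 ≤ M0 α :=
  Finset.sum_nonneg fun k _ => by positivity

set_option maxHeartbeats 1000000 in
lemma phi_bounds {c : ℝ} (hc : 0 < c) {α : ℕ} (hα : 2 ≤ α) {t : ℝ}
    (ht0 : 0 < t) (ht2 : t ≤ 1/2) :
    0 < f c α (1-t) + f c α (1+t) ∧ f c α (1-t) + f c α (1+t) ≤ M0 α + 1/c := by
  set E₁ := Real.exp (-(1-t)/c) with hE₁
  set E₂ := Real.exp (-(1+t)/c) with hE₂
  set Sp := ∑ k ∈ Finset.range α, (1+t)^k with hSp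
  set Sm := ∑ k ∈ Finset.range α, (1-t)^k with hSm
  have hD2eq : (1+t)^α - 1 = Sp * t := by
    have h := geom_sum_mul (1+t) α
    linear_combination -h
  have hD1eq : 1 - (1-t)^α = Sm * t := by
    have h := geom_sum_mul (1-t) α
    linear_combination h
  have hSm1 : (1:ℝ) ≤ Sm := by
    have h0 : (0:ℕ) ∈ Finset.range α := Finset.mem_range.mpr (by omega)
    have := Finset.single_le_sum (f := fun k => (1-t)^k) (fun i _ => pow_nonneg (by linarith) i) h0
    simpa using this
  have hSpα : (α:ℝ) ≤ Sp := by
    calc (α:ℝ) = ∑ _k ∈ Finset.range α, (1:ℝ) := by simp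
      _ ≤ Sp := Finset.sum_le_sum fun i _ => one_le_pow₀ (by linarith)
  have hSmSp : Sm ≤ Sp :=
    Finset.sum_le_sum fun i _ => pow_le_pow_left₀ (by linarith) (by linarith) i
  have hSdiff : Sp - Sm ≤ 2 * t * M0 α := by
    have heq : Sp - Sm = ∑ k ∈ Finset.range α, ((1+t)^k - (1-t)^k) :=
      by rw [Finset.sum_sub_distrib]
    rw [heq]
    have hperk : ∀ k ∈ Finset.range α, (1+t)^k - (1-t)^k ≤ 2 * t * ((k:ℝ) * (3/2)^k) := by
      intro k _
      have hg := geom_sum₂_mul (1+t) (1-t) k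
      have key : (1+t)^k - (1-t)^k
          = (∑ i ∈ Finset.range k, (1+t)^i * (1-t)^(k-1-i)) * (2*t) := by
        linear_combination -hg
      rw [key]
      have hsum : (∑ i ∈ Finset.range k, (1+t)^i * (1-t)^(k-1-i)) ≤ (k:ℝ) * (3/2)^k := by
        calc (∑ i ∈ Finset.range k, (1+t)^i * (1-t)^(k-1-i))
            ≤ ∑ _i ∈ Finset.range k, ((3/2:ℝ))^k := by
              refine Finset.sum_le_sum fun i hi => ?_
              have h1 : (1+t)^i ≤ ((3/2:ℝ))^i :=
                pow_le_pow_left₀ (by linarith) (by linarith) i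
              have h2 : ((3/2:ℝ))^i ≤ ((3/2:ℝ))^k :=
                pow_le_pow_right₀ (by norm_num) (le_of_lt (Finset.mem_range.mp hi))
              have h3 : (1-t)^(k-1-i) ≤ 1 := pow_le_one₀ (by linarith) (by linarith)
              calc (1+t)^i * (1-t)^(k-1-i) ≤ (1+t)^i * 1 :=
                    mul_le_mul_of_nonneg_left h3 (by positivity)
                _ = (1+t)^i := mul_one _
                _ ≤ (3/2:ℝ)^k := le_trans h1 h2
          _ = (k:ℝ) * (3/2)^k := by rw [Finset.sum_const, Finset.card_range, nsmul_eq_mul]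
      calc (∑ i ∈ Finset.range k, (1+t)^i * (1-t)^(k-1-i)) * (2*t)
          ≤ ((k:ℝ) * (3/2)^k) * (2*t) := by
            apply mul_le_mul_of_nonneg_right hsum (by linarith)
        _ = 2 * t * ((k:ℝ) * (3/2)^k) := by ring
    calc (∑ k ∈ Finset.range α, ((1+t)^k - (1-t)^k))
        ≤ ∑ k ∈ Finset.range α, 2 * t * ((k:ℝ) * (3/2)^k) := Finset.sum_le_sum hperk
      _ = 2 * t * M0 α := by rw [M0, Finset.mul_sum]
  -- basic denominators
  have hD1pos : 0 < 1 - (1-t)^α := by rw [hD1eq]; positivity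
  have hD2pos : 0 < (1+t)^α - 1 := by
    rw [hD2eq]
    have h2α : (2:ℝ) ≤ (α:ℝ) := by exact_mod_cast hα
    nlinarith
  have hD1get : t ≤ 1 - (1-t)^α := by rw [hD1eq]; nlinarith
  have hD2ge2t : 2*t ≤ (1+t)^α - 1 := by
    rw [hD2eq]
    have : (2:ℝ) ≤ (α:ℝ) := by exact_mod_cast hα
    nlinarith
  have hD1le1 : 1 - (1-t)^α ≤ 1 := by nlinarith [pow_nonneg (by linarith : (0:ℝ) ≤ 1-t) α]
  have hDdiff0 : 0 ≤ ((1+t)^α - 1) - (1 - (1-t)^α) := by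
    rw [hD1eq, hD2eq]; nlinarith
  have hDdiff : ((1+t)^α - 1) - (1 - (1-t)^α) ≤ 2 * t^2 * M0 α := by
    rw [hD1eq, hD2eq]
    have : Sp * t - Sm * t = (Sp - Sm) * t := by ring
    nlinarith [hSdiff]
  -- exponentials
  have hE1pos : 0 < E₁ := Real.exp_pos _
  have hE2pos : 0 < E₂ := Real.exp_pos _
  have hE1le1 : E₁ ≤ 1 := by
    rw [hE₁, Real.exp_le_one_iff]
    apply div_nonpos_of_nonpos_of_nonneg <;> linarith
  have hE2ltE1 : E₂ < E₁ := by
    rw [hE₁, hE₂, Real.exp_lt_exp]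
    apply div_lt_div_of_pos_right (by linarith) hc
  have hEdiff : E₁ - E₂ ≤ 2*t/c := by
    have hx : E₂ = E₁ * Real.exp (-(2*t/c)) := by
      rw [hE₁, hE₂, ← Real.exp_add]
      congr 1; ring
    have h1 : -(2*t/c) + 1 ≤ Real.exp (-(2*t/c)) := Real.add_one_le_exp _
    have h2 : Real.exp (-(2*t/c)) ≤ 1 := by
      rw [Real.exp_le_one_iff]
      exact neg_nonpos.mpr (by positivity)
    have h4 : E₁ * (1 - Real.exp (-(2*t/c))) ≤ 1 * (1 - Real.exp (-(2*t/c))) :=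
      mul_le_mul_of_nonneg_right hE1le1 (by linarith)
    calc E₁ - E₂ = E₁ * (1 - Real.exp (-(2*t/c))) := by rw [hx]; ring
      _ ≤ 1 * (1 - Real.exp (-(2*t/c))) := h4
      _ ≤ 2*t/c := by linarith
  -- rewrite f values
  have hf1 : f c α (1-t) = E₁ / (1 - (1-t)^α) := rfl
  have hf2 : f c α (1+t) = -(E₂ / ((1+t)^α - 1)) := by
    rw [f, ← hE₂, show (1:ℝ) - (1+t)^α = -((1+t)^α - 1) by ring, div_neg]
  rw [hf1, hf2]
  constructor
  · have h1 : E₂ / ((1+t)^α - 1) ≤ E₂ / (1 - (1-t)^α) :=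
      div_le_div_of_nonneg_left hE2pos.le hD1pos (by linarith)
    have h2 : E₂ / (1 - (1-t)^α) < E₁ / (1 - (1-t)^α) :=
      div_lt_div_of_pos_right hE2ltE1 hD1pos
    linarith
  · have heq : E₁ / (1 - (1-t)^α) + -(E₂ / ((1+t)^α - 1))
        = (E₁ * ((1+t)^α - 1) - (1 - (1-t)^α) * E₂) / ((1 - (1-t)^α) * ((1+t)^α - 1)) := by
      rw [← sub_eq_add_neg, div_sub_div _ _ (ne_of_gt hD1pos) (ne_of_gt hD2pos)]
    rw [heq, div_le_iff₀ (by positivity)]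
    have h2t : 2 * t^2 ≤ (1 - (1-t)^α) * ((1+t)^α - 1) := by
      nlinarith [mul_le_mul hD1get hD2ge2t (by linarith) (by linarith)]
    have hsplit : E₁ * ((1+t)^α - 1) - (1 - (1-t)^α) * E₂
        = E₁ * (((1+t)^α - 1) - (1 - (1-t)^α)) + (1 - (1-t)^α) * (E₁ - E₂) := by ring
    have h1 : E₁ * (((1+t)^α - 1) - (1 - (1-t)^α)) ≤ 2 * t^2 * M0 α := by
      nlinarith [mul_le_mul_of_nonneg_right hE1le1 hDdiff0]
    have h2 : (1 - (1-t)^α) * (E₁ - E₂) ≤ (1 - (1-t)^α) * ((1+t)^α - 1) / c := by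
      calc (1 - (1-t)^α) * (E₁ - E₂) ≤ (1 - (1-t)^α) * (2*t/c) :=
            mul_le_mul_of_nonneg_left hEdiff hD1pos.le
        _ = ((1 - (1-t)^α) * (2*t))/c := by ring
        _ ≤ (1 - (1-t)^α) * ((1+t)^α - 1) / c := by
            gcongr
    have h3 : 2 * t^2 * M0 α ≤ M0 α * ((1 - (1-t)^α) * ((1+t)^α - 1)) := by
      nlinarith [mul_le_mul_of_nonneg_left h2t (M0_nonneg α)]
    have hrhs : (M0 α + 1/c) * ((1 - (1-t)^α) * ((1+t)^α - 1))
        = M0 α * ((1 - (1-t)^α) * ((1+t)^α - 1))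
          + (1 - (1-t)^α) * ((1+t)^α - 1) / c := by
      field_simp
    linarith [h1, h2, h3]

/-- the transformed tail integrand under `u ↦ u⁻¹` -/
noncomputable def q (c : ℝ) (α : ℕ) (v : ℝ) : ℝ :=
  Real.exp (-v⁻¹ / c) * v ^ α / (v ^ 2 * (1 - v ^ α))

lemma q_meas (c : ℝ) (α : ℕ) : Measurable (q c α) :=
  ((Real.measurable_exp.comp (measurable_inv.neg.div_const c)).mul
      (measurable_id.pow_const α)).div
    ((measurable_id.pow_const 2).mul (measurable_const.sub (measurable_id.pow_const α)))

lemma image_inv_Ioo {b : ℝ} (hb : 0 < b) :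
    (fun v : ℝ => v⁻¹) '' Set.Ioo 0 b = Set.Ioi b⁻¹ := by
  ext x
  simp only [Set.mem_image, Set.mem_Ioo, Set.mem_Ioi]
  constructor
  · rintro ⟨v, ⟨hv0, hvb⟩, rfl⟩
    exact (inv_lt_inv₀ hb hv0).mpr hvb
  · intro hx
    have hb' : (0:ℝ) < b⁻¹ := by positivity
    have hx0 : 0 < x := lt_trans hb' hx
    refine ⟨x⁻¹, ⟨by positivity, ?_⟩, inv_inv x⟩
    have : x⁻¹ < (b⁻¹)⁻¹ := (inv_lt_inv₀ hx0 hb').mpr hx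
    simpa using this

set_option maxHeartbeats 1000000 in
lemma sum_lower {c : ℝ} (hc : 0 < c) {α : ℕ} (hα : 2 ≤ α) {ε : ℝ}
    (hε0 : 0 < ε) (hε2 : ε < 1/2) :
    (Real.exp (-(1/(2*c))) - Real.exp (-(2/c)))/2 - ε
      ≤ (∫ u in (0:ℝ)..(1-ε), f c α u) + ∫ u in Set.Ioi (1+ε), f c α u := by
  have hα1 : 1 ≤ α := by omega
  set δ := Real.exp (-(1/(2*c))) - Real.exp (-(2/c)) with hδ
  have hδ0 : 0 ≤ δ := by
    rw [hδ, sub_nonneg, Real.exp_le_exp]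
    rw [neg_le_neg_iff]
    rw [div_le_div_iff₀ (by positivity) hc]
    nlinarith
  clear_value δ
  set b := (1+ε)⁻¹ with hb
  have hεpos : (0:ℝ) < 1 + ε := by linarith
  have hb0 : 0 < b := by positivity
  have hbhalf : 1/2 < b := by
    rw [hb, ← one_div, lt_div_iff₀ hεpos]
    nlinarith
  have hb1 : b < 1 := by
    rw [hb, ← one_div, div_lt_one hεpos]
    linarith
  have h1εb : 1 - ε ≤ b := by
    rw [hb, ← one_div, le_div_iff₀ hεpos]
    nlinarith
  have h1ε0 : (0:ℝ) < 1 - ε := by linarith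
  -- tail rewrite as -F
  have htail : (∫ u in Set.Ioi (1+ε), f c α u)
      = -∫ u in Set.Ioi (1+ε), Real.exp (-u / c) / (u ^ α - 1) := by
    rw [← MeasureTheory.integral_neg]
    refine MeasureTheory.setIntegral_congr_fun measurableSet_Ioi fun u hu => ?_
    have h1u : 1 < u := by have := Set.mem_Ioi.mp hu; linarith
    rw [f, show (1:ℝ) - u ^ α = -(u ^ α - 1) by ring, div_neg]
  -- change of variables
  have hcov : (∫ u in Set.Ioi (1+ε), Real.exp (-u / c) / (u ^ α - 1))
      = ∫ v in Set.Ioo 0 b, q c α v := by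
    have himg : (fun v : ℝ => v⁻¹) '' Set.Ioo 0 b = Set.Ioi (1+ε) := by
      rw [image_inv_Ioo hb0, hb, inv_inv]
    rw [← himg,
      MeasureTheory.integral_image_eq_integral_abs_deriv_smul measurableSet_Ioo
        (fun x hx => (hasDerivAt_inv (ne_of_gt hx.1)).hasDerivWithinAt)
        (fun x _ y _ hxy => inv_injective hxy)
        (fun u => Real.exp (-u / c) / (u ^ α - 1))]
    refine MeasureTheory.setIntegral_congr_fun measurableSet_Ioo fun v hv => ?_
    obtain ⟨hv0, hvb⟩ := hv
    have hv1 : v < 1 := lt_trans hvb hb1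
    have hvα : v ^ α < 1 := pow_lt_one₀ hv0.le hv1 (by omega)
    have hvα0 : 0 < v ^ α := pow_pos hv0 α
    have hinvα : (v⁻¹) ^ α - 1 = (1 - v ^ α) / v ^ α := by
      rw [inv_pow]
      field_simp
    have hne : (1:ℝ) - v ^ α ≠ 0 := ne_of_gt (by linarith)
    rw [smul_eq_mul, abs_neg, abs_of_pos (by positivity : (0:ℝ) < (v^2)⁻¹), hinvα, q]
    rw [div_div_eq_mul_div]
    field_simp
  -- pointwise comparison q ≤ f on Ioo 0 b, with gap δ on Ioo 0 (1/2)
  have hdiff_eq : ∀ v ∈ Set.Ioo (0:ℝ) b,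
      f c α v - q c α v
        = (Real.exp (-v / c) * v ^ 2 - Real.exp (-v⁻¹ / c) * v ^ α)
            / (v ^ 2 * (1 - v ^ α)) := by
    intro v hv
    obtain ⟨hv0, hvb⟩ := hv
    have hv1 : v < 1 := lt_trans hvb hb1
    have hvα : v ^ α < 1 := pow_lt_one₀ hv0.le hv1 (by omega)
    have hne : (1:ℝ) - v ^ α ≠ 0 := ne_of_gt (by linarith)
    rw [f, q]
    field_simp
  have hnum_nonneg : ∀ v ∈ Set.Ioo (0:ℝ) b,
      0 ≤ Real.exp (-v / c) * v ^ 2 - Real.exp (-v⁻¹ / c) * v ^ α := by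
    intro v hv
    obtain ⟨hv0, hvb⟩ := hv
    have hv1 : v < 1 := lt_trans hvb hb1
    have hpow : v ^ α ≤ v ^ 2 := pow_le_pow_of_le_one hv0.le hv1.le hα
    have hvinv : v ≤ v⁻¹ := by
      nlinarith [mul_inv_cancel₀ (ne_of_gt hv0), mul_pos hv0 hv0]
    have hexp : Real.exp (-v⁻¹ / c) ≤ Real.exp (-v / c) := by
      rw [Real.exp_le_exp, div_le_div_iff₀ hc hc]
      nlinarith
    have := mul_le_mul hexp hpow (by positivity) (Real.exp_pos _).le
    linarith
  have hq_le_f : ∀ v ∈ Set.Ioo (0:ℝ) b, q c α v ≤ f c α v := by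
    intro v hv
    have h1 := hdiff_eq v hv
    have h2 := hnum_nonneg v hv
    obtain ⟨hv0, hvb⟩ := hv
    have hv1 : v < 1 := lt_trans hvb hb1
    have hvα : v ^ α < 1 := pow_lt_one₀ hv0.le hv1 (by omega)
    have : 0 ≤ f c α v - q c α v := by
      rw [h1]; exact div_nonneg h2 (by nlinarith)
    linarith
  have hgap : ∀ v ∈ Set.Ioo (0:ℝ) (1/2), δ ≤ f c α v - q c α v := by
    intro v hv
    obtain ⟨hv0, hvhalf⟩ := hv
    have hvb : v < b := lt_trans hvhalf hbhalf
    have hv1 : v < 1 := lt_trans hvb hb1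
    have hvα : v ^ α < 1 := pow_lt_one₀ hv0.le hv1 (by omega)
    have heq := hdiff_eq v ⟨hv0, hvb⟩
    rw [heq, le_div_iff₀ (mul_pos (by positivity) (by linarith : (0:ℝ) < 1 - v ^ α))]
    have hE1 : Real.exp (-(1/(2*c))) ≤ Real.exp (-v / c) := by
      rw [Real.exp_le_exp, show -v/c = -(v/c) by ring, neg_le_neg_iff,
        div_le_div_iff₀ hc (by positivity)]
      nlinarith
    have h2v : 2 < v⁻¹ := by
      nlinarith [mul_inv_cancel₀ (ne_of_gt hv0), mul_pos hv0 hv0]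
    have hE2 : Real.exp (-v⁻¹ / c) ≤ Real.exp (-(2/c)) := by
      rw [Real.exp_le_exp, show -v⁻¹/c = -(v⁻¹/c) by ring, neg_le_neg_iff,
        div_le_div_iff₀ hc hc]
      nlinarith
    have hδle : δ ≤ Real.exp (-v / c) - Real.exp (-v⁻¹ / c) := by
      rw [hδ]; linarith
    have hv2 : (0:ℝ) < v ^ 2 := by positivity
    have hd1 : v ^ 2 * (1 - v ^ α) ≤ v ^ 2 := by nlinarith [mul_nonneg (sq_nonneg v) (pow_nonneg hv0.le α)]
    have hpow : v ^ α ≤ v ^ 2 := pow_le_pow_of_le_one hv0.le hv1.le hα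
    have key : Real.exp (-v⁻¹ / c) * v ^ α ≤ Real.exp (-v⁻¹ / c) * v ^ 2 :=
      mul_le_mul_of_nonneg_left hpow (Real.exp_pos _).le
    have k1 : δ * (v ^ 2 * (1 - v ^ α)) ≤ δ * v ^ 2 :=
      mul_le_mul_of_nonneg_left hd1 hδ0
    have k2 : δ * v ^ 2 ≤ (Real.exp (-v / c) - Real.exp (-v⁻¹ / c)) * v ^ 2 :=
      mul_le_mul_of_nonneg_right hδle hv2.le
    have k2' : δ * v ^ 2 ≤ Real.exp (-v / c) * v ^ 2 - Real.exp (-v⁻¹ / c) * v ^ 2 := by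
      calc δ * v ^ 2 ≤ (Real.exp (-v / c) - Real.exp (-v⁻¹ / c)) * v ^ 2 := k2
        _ = Real.exp (-v / c) * v ^ 2 - Real.exp (-v⁻¹ / c) * v ^ 2 := by ring
    linarith [k1, k2', key]
  -- integrability
  have hf_int_b : MeasureTheory.IntegrableOn (f c α) (Set.Ioo 0 b) := by
    have h1 : MeasureTheory.IntegrableOn (f c α) (Set.Icc 0 b) :=
      (f_contOn_Icc c hα1 hb0.le hb1).integrableOn_Icc
    exact h1.mono_set Set.Ioo_subset_Icc_self
  have hq_int : MeasureTheory.IntegrableOn (q c α) (Set.Ioo 0 b) := by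
    refine hf_int_b.mono' ((q_meas c α).aestronglyMeasurable.restrict) ?_
    filter_upwards [MeasureTheory.ae_restrict_mem measurableSet_Ioo] with v hv
    have h1 := hq_le_f v hv
    have h2 : 0 ≤ q c α v := by
      obtain ⟨hv0, hvb⟩ := hv
      have hv1 : v < 1 := lt_trans hvb hb1
      have hvα : v ^ α < 1 := pow_lt_one₀ hv0.le hv1 (by omega)
      rw [q]
      apply div_nonneg (by positivity) (by nlinarith)
    rw [Real.norm_eq_abs, abs_of_nonneg h2]
    exact h1
  have hsub_int : MeasureTheory.IntegrableOn (fun v => f c α v - q c α v) (Set.Ioo 0 b) :=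
    hf_int_b.sub hq_int
  -- gap integral estimate
  have hgap_int : δ * (1/2) ≤ ∫ v in Set.Ioo (0:ℝ) b, (f c α v - q c α v) := by
    have hmono : (∫ v in Set.Ioo (0:ℝ) (1/2), (f c α v - q c α v))
        ≤ ∫ v in Set.Ioo (0:ℝ) b, (f c α v - q c α v) := by
      refine MeasureTheory.setIntegral_mono_set hsub_int ?_ ?_
      · filter_upwards [MeasureTheory.ae_restrict_mem measurableSet_Ioo] with v hv
        have h1 := hq_le_f v hv
        simp only [Pi.zero_apply]
        linarith
      · exact (Set.Ioo_subset_Ioo_right hbhalf.le).eventuallyLE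
    have hconst : δ * (1/2) ≤ ∫ v in Set.Ioo (0:ℝ) (1/2), (f c α v - q c α v) := by
      have h := MeasureTheory.setIntegral_ge_of_const_le (μ := MeasureTheory.volume)
        (f := fun v => f c α v - q c α v) (s := Set.Ioo (0:ℝ) (1/2)) (c := δ)
        measurableSet_Ioo (by
          rw [Real.volume_Ioo]
          exact ENNReal.ofReal_ne_top)
        (fun x hx => hgap x hx)
        (hsub_int.mono_set (Set.Ioo_subset_Ioo_right hbhalf.le))
      rw [Real.volume_real_Ioo_of_le (by norm_num), smul_eq_mul, mul_comm] at h
      calc δ * (1/2) = δ * (1/2 - 0) := by norm_num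
        _ ≤ _ := h
    linarith
  -- T ≤ ∫_{Ioo 0 b} f - δ/2
  have hsub_eq : (∫ v in Set.Ioo (0:ℝ) b, (f c α v - q c α v))
      = (∫ v in Set.Ioo (0:ℝ) b, f c α v) - ∫ v in Set.Ioo (0:ℝ) b, q c α v :=
    MeasureTheory.integral_sub hf_int_b hq_int
  -- interval splitting of ∫_{Ioo 0 b} f
  have hIoo_eq : (∫ v in Set.Ioo (0:ℝ) b, f c α v) = ∫ u in (0:ℝ)..b, f c α u := by
    rw [intervalIntegral.integral_of_le hb0.le, MeasureTheory.integral_Ioc_eq_integral_Ioo]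
  have hint1 : IntervalIntegrable (f c α) MeasureTheory.volume 0 (1-ε) := by
    apply ContinuousOn.intervalIntegrable
    refine (f_contOn_Icc c hα1 hb0.le hb1).mono ?_
    rw [Set.uIcc_of_le h1ε0.le]
    exact Set.Icc_subset_Icc le_rfl h1εb
  have hint2 : IntervalIntegrable (f c α) MeasureTheory.volume (1-ε) b := by
    apply ContinuousOn.intervalIntegrable
    refine (f_contOn_Icc c hα1 hb0.le hb1).mono ?_
    rw [Set.uIcc_of_le h1εb]
    exact Set.Icc_subset_Icc h1ε0.le le_rfl
  have hsplit : (∫ u in (0:ℝ)..b, f c α u)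
      = (∫ u in (0:ℝ)..(1-ε), f c α u) + ∫ u in (1-ε)..b, f c α u :=
    (intervalIntegral.integral_add_adjacent_intervals hint1 hint2).symm
  -- bound on the middle piece
  have hmid : |∫ u in (1-ε)..b, f c α u| ≤ ε := by
    have hbound : ∀ x ∈ Set.uIoc (1-ε) b, ‖f c α x‖ ≤ (1+ε)/ε := by
      rw [Set.uIoc_of_le h1εb]
      rintro x ⟨hx1, hx2⟩
      have hx0 : 0 < x := by linarith
      have hx1' : x < 1 := lt_of_le_of_lt hx2 hb1
      have hxα : x ^ α < 1 := pow_lt_one₀ hx0.le hx1' (by omega)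
      have hfx0 : 0 ≤ f c α x := div_nonneg (Real.exp_pos _).le (by linarith)
      rw [Real.norm_eq_abs, abs_of_nonneg hfx0, f]
      have hxαx : x ^ α ≤ x := pow_le_of_le_one hx0.le hx1'.le (by omega)
      have h1b : 1 - b = ε / (1+ε) := by
        rw [hb]; field_simp; ring
      have hden : ε / (1+ε) ≤ 1 - x ^ α := by
        have : x ≤ b := hx2
        rw [← h1b]; linarith
      have hdenpos : (0:ℝ) < ε / (1+ε) := by positivity
      calc Real.exp (-x / c) / (1 - x ^ α) ≤ 1 / (ε / (1+ε)) := by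
            apply div_le_div₀ (by norm_num) ?_ hdenpos hden
            rw [Real.exp_le_one_iff]
            apply div_nonpos_of_nonpos_of_nonneg <;> linarith
        _ = (1+ε)/ε := by rw [one_div_div]
    have h := intervalIntegral.norm_integral_le_of_norm_le_const hbound
    rw [Real.norm_eq_abs] at h
    have habs : |b - (1-ε)| = ε^2 / (1+ε) := by
      rw [abs_of_nonneg (by linarith)]
      rw [hb]; field_simp; ring
    rw [habs] at h
    calc |∫ u in (1-ε)..b, f c α u| ≤ (1+ε)/ε * (ε^2/(1+ε)) := h
      _ = ε := by field_simp
  -- put it all together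
  have hT : (∫ v in Set.Ioo (0:ℝ) b, q c α v)
      ≤ (∫ u in (0:ℝ)..(1-ε), f c α u) + ε - δ * (1/2) := by
    have h1 : (∫ v in Set.Ioo (0:ℝ) b, q c α v)
        = (∫ v in Set.Ioo (0:ℝ) b, f c α v)
          - ∫ v in Set.Ioo (0:ℝ) b, (f c α v - q c α v) := by
      rw [hsub_eq]; ring
    rw [h1, hIoo_eq, hsplit]
    have h2 : (∫ u in (1-ε)..b, f c α u) ≤ ε := le_trans (le_abs_self _) hmid
    linarith
  rw [htail, hcov]
  linarith
end PVAux

open PVAux in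
set_option maxHeartbeats 1000000 in
/-- For every real `c > 0` and every integer `α ≥ 2`, the Cauchy principal value
`PV ∫₀^∞ e^{−u/c}/(1 − u^α) du` exists (the limit as `ε → 0⁺` of
`∫₀^{1−ε} + ∫_{1+ε}^∞` exists as a finite real number) and is strictly positive. -/
theorem pv_integral_exp_div_one_sub_pow_exists_pos
    (c : ℝ) (hc : 0 < c) (α : ℕ) (hα : 2 ≤ α) :
    ∃ L : ℝ, 0 < L ∧
      Tendsto (fun ε : ℝ =>
          (∫ u in (0:ℝ)..(1 - ε), Real.exp (-u / c) / (1 - u ^ α)) +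
            ∫ u in Set.Ioi (1 + ε), Real.exp (-u / c) / (1 - u ^ α))
        (nhdsWithin 0 (Set.Ioi 0)) (nhds L) := by
  have hα1 : 1 ≤ α := by omega
  set φ : ℝ → ℝ := fun t => f c α (1-t) + f c α (1+t) with hφ
  set M : ℝ := M0 α + 1/c with hM
  have hMnn : 0 ≤ M := by
    rw [hM]
    have := M0_nonneg α
    positivity
  have hφbound : ∀ t ∈ Set.Ioc (0:ℝ) (1/2), ‖φ t‖ ≤ M := by
    intro t ht
    obtain ⟨h1, h2⟩ := ht
    obtain ⟨hp, hu⟩ := phi_bounds hc hα h1 h2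
    rw [hφ, Real.norm_eq_abs, abs_of_pos hp]
    exact hu
  have hφmeas : Measurable φ := by
    rw [hφ]
    exact ((f_meas c α).comp (measurable_const.sub measurable_id)).add
      ((f_meas c α).comp (measurable_const.add measurable_id))
  have hφint : IntervalIntegrable φ volume 0 (1/2) := by
    rw [intervalIntegrable_iff, Set.uIoc_of_le (by norm_num : (0:ℝ) ≤ 1/2)]
    have hfin : IsFiniteMeasure (volume.restrict (Set.Ioc (0:ℝ) (1/2))) :=
      ⟨by rw [Measure.restrict_apply_univ]; exact measure_Ioc_lt_top⟩
    refine ⟨hφmeas.aestronglyMeasurable.restrict, ?_⟩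
    apply MeasureTheory.HasFiniteIntegral.of_bounded (C := M)
    filter_upwards [ae_restrict_mem measurableSet_Ioc] with t ht
    exact hφbound t ht
  set C : ℝ := (∫ u in (0:ℝ)..(1/2), f c α u) + ∫ u in Set.Ioi (3/2:ℝ), f c α u with hC
  set L : ℝ := C + ∫ t in (0:ℝ)..(1/2), φ t with hL
  -- the key identity
  have hkey : ∀ ε ∈ Set.Ioo (0:ℝ) (1/2),
      (∫ u in (0:ℝ)..(1-ε), f c α u) + (∫ u in Set.Ioi (1+ε), f c α u)
        = L - ∫ t in (0:ℝ)..ε, φ t := by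
    intro ε hε
    obtain ⟨hε0, hε2⟩ := hε
    have hfc : ContinuousOn (f c α) (Set.Icc 0 (1-ε)) :=
      f_contOn_Icc c hα1 (by linarith) (by linarith)
    have hi1 : IntervalIntegrable (f c α) volume 0 (1/2) := by
      apply ContinuousOn.intervalIntegrable
      refine hfc.mono ?_
      rw [Set.uIcc_of_le (by norm_num : (0:ℝ) ≤ 1/2)]
      exact Set.Icc_subset_Icc le_rfl (by linarith)
    have hi2 : IntervalIntegrable (f c α) volume (1/2) (1-ε) := by
      apply ContinuousOn.intervalIntegrable
      refine hfc.mono ?_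
      rw [Set.uIcc_of_le (by linarith : (1:ℝ)/2 ≤ 1-ε)]
      exact Set.Icc_subset_Icc (by norm_num) le_rfl
    have hsplit1 : (∫ u in (0:ℝ)..(1-ε), f c α u)
        = (∫ u in (0:ℝ)..(1/2), f c α u) + ∫ u in (1/2:ℝ)..(1-ε), f c α u :=
      (intervalIntegral.integral_add_adjacent_intervals hi1 hi2).symm
    have hcomp1 : (∫ t in ε..(1/2:ℝ), f c α (1-t)) = ∫ u in (1/2:ℝ)..(1-ε), f c α u := by
      have h := intervalIntegral.integral_comp_sub_left (a := ε) (b := 1/2) (f c α) 1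
      rw [show (1:ℝ) - 1/2 = 1/2 by norm_num] at h
      exact h
    have htail_int : IntegrableOn (f c α) (Set.Ioi (1+ε)) :=
      f_integrableOn_Ioi c hc hα (by linarith)
    have hsplit2 : (∫ u in Set.Ioi (1+ε), f c α u)
        = (∫ u in Set.Ioc (1+ε) (3/2:ℝ), f c α u) + ∫ u in Set.Ioi (3/2:ℝ), f c α u := by
      rw [← Set.Ioc_union_Ioi_eq_Ioi (by linarith : (1:ℝ)+ε ≤ 3/2),
        MeasureTheory.setIntegral_union (Set.Ioc_disjoint_Ioi le_rfl) measurableSet_Ioi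
          (htail_int.mono_set Set.Ioc_subset_Ioi_self)
          (htail_int.mono_set (Set.Ioi_subset_Ioi (by linarith)))]
    have hIoc : (∫ u in Set.Ioc (1+ε) (3/2:ℝ), f c α u) = ∫ u in (1+ε)..(3/2:ℝ), f c α u :=
      (intervalIntegral.integral_of_le (by linarith)).symm
    have hcomp2 : (∫ t in ε..(1/2:ℝ), f c α (1+t)) = ∫ u in (1+ε)..(3/2:ℝ), f c α u := by
      have h := intervalIntegral.integral_comp_add_left (a := ε) (b := 1/2) (f c α) 1
      rw [show (1:ℝ) + 1/2 = 3/2 by norm_num] at h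
      exact h
    have hiφa : IntervalIntegrable φ volume 0 ε := by
      apply hφint.mono_set
      rw [Set.uIcc_of_le hε0.le, Set.uIcc_of_le (by norm_num : (0:ℝ) ≤ 1/2)]
      exact Set.Icc_subset_Icc le_rfl hε2.le
    have hiφb : IntervalIntegrable φ volume ε (1/2) := by
      apply hφint.mono_set
      rw [Set.uIcc_of_le hε2.le, Set.uIcc_of_le (by norm_num : (0:ℝ) ≤ 1/2)]
      exact Set.Icc_subset_Icc hε0.le le_rfl
    have hφadd : (∫ t in (0:ℝ)..ε, φ t) + (∫ t in ε..(1/2:ℝ), φ t) = ∫ t in (0:ℝ)..(1/2), φ t :=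
      intervalIntegral.integral_add_adjacent_intervals hiφa hiφb
    have hg1 : IntervalIntegrable (fun t => f c α (1-t)) volume ε (1/2) := by
      apply ContinuousOn.intervalIntegrable
      refine hfc.comp ((continuous_const.sub continuous_id).continuousOn) ?_
      intro t ht
      rw [Set.uIcc_of_le hε2.le] at ht
      obtain ⟨ht1, ht2⟩ := ht
      exact Set.mem_Icc.mpr ⟨by linarith, by linarith⟩
    have hg2 : IntervalIntegrable (fun t => f c α (1+t)) volume ε (1/2) := by
      apply ContinuousOn.intervalIntegrable
      refine (f_contOn_Icc' c hα1 (by linarith : (1:ℝ) < 1+ε)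
        (b := 3/2)).comp ((continuous_const.add continuous_id).continuousOn) ?_
      intro t ht
      rw [Set.uIcc_of_le hε2.le] at ht
      obtain ⟨ht1, ht2⟩ := ht
      exact Set.mem_Icc.mpr ⟨by linarith, by linarith⟩
    have hφeq : (∫ t in ε..(1/2:ℝ), φ t)
        = (∫ t in ε..(1/2:ℝ), f c α (1-t)) + ∫ t in ε..(1/2:ℝ), f c α (1+t) := by
      rw [hφ]
      exact intervalIntegral.integral_add hg1 hg2
    rw [hL, hC]
    linarith [hsplit1, hcomp1, hsplit2, hIoc, hcomp2, hφadd, hφeq]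
  -- the limit
  have hmem : Set.Ioo (0:ℝ) (1/2) ∈ nhdsWithin 0 (Set.Ioi 0) :=
    Ioo_mem_nhdsGT (by norm_num)
  have htend0 : Tendsto (fun ε : ℝ => ∫ t in (0:ℝ)..ε, φ t)
      (nhdsWithin 0 (Set.Ioi 0)) (nhds 0) := by
    apply squeeze_zero_norm' (a := fun ε : ℝ => M * |ε|)
    · filter_upwards [hmem] with ε hε
      have h : ‖∫ t in (0:ℝ)..ε, φ t‖ ≤ M * |ε - 0| := by
        apply intervalIntegral.norm_integral_le_of_norm_le_const
        intro x hx
        rw [Set.uIoc_of_le hε.1.le] at hx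
        exact hφbound x ⟨hx.1, by linarith [hx.2, hε.2]⟩
      simpa using h
    · have h : Tendsto (fun ε : ℝ => M * |ε|) (nhds 0) (nhds (M * |(0:ℝ)|)) :=
        (continuous_const.mul continuous_abs).tendsto 0
      simp only [abs_zero, mul_zero] at h
      exact h.mono_left nhdsWithin_le_nhds
  have htendL : Tendsto (fun ε : ℝ => L - ∫ t in (0:ℝ)..ε, φ t)
      (nhdsWithin 0 (Set.Ioi 0)) (nhds L) := by
    have h2 : Tendsto (fun ε : ℝ => L - ∫ t in (0:ℝ)..ε, φ t)
        (nhdsWithin 0 (Set.Ioi 0)) (nhds (L - 0)) :=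
      (tendsto_const_nhds : Tendsto (fun _ : ℝ => L) (nhdsWithin 0 (Set.Ioi 0)) (nhds L)).sub htend0
    simpa using h2
  have htendsum : Tendsto (fun ε : ℝ =>
      (∫ u in (0:ℝ)..(1-ε), f c α u) + ∫ u in Set.Ioi (1+ε), f c α u)
      (nhdsWithin 0 (Set.Ioi 0)) (nhds L) := by
    refine htendL.congr' ?_
    filter_upwards [hmem] with ε hε
    exact (hkey ε hε).symm
  -- positivity
  set δ : ℝ := Real.exp (-(1/(2*c))) - Real.exp (-(2/c)) with hδ
  have hδpos : 0 < δ := by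
    rw [hδ, sub_pos, Real.exp_lt_exp, neg_lt_neg_iff, div_lt_div_iff₀ (by positivity) hc]
    nlinarith
  have hlow : ∀ᶠ ε in nhdsWithin (0:ℝ) (Set.Ioi 0), δ/2 - ε
      ≤ (∫ u in (0:ℝ)..(1-ε), f c α u) + ∫ u in Set.Ioi (1+ε), f c α u := by
    filter_upwards [hmem] with ε hε
    exact sum_lower hc hα hε.1 hε.2
  have htt : Tendsto (fun ε : ℝ => δ/2 - ε) (nhdsWithin 0 (Set.Ioi 0)) (nhds (δ/2)) := by
    have h : Tendsto (fun ε : ℝ => δ/2 - ε) (nhds 0) (nhds (δ/2 - 0)) :=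
      (continuous_const.sub continuous_id).tendsto 0
    simp only [sub_zero] at h
    exact h.mono_left nhdsWithin_le_nhds
  have hLpos : δ/2 ≤ L := le_of_tendsto_of_tendsto htt htendsum hlow
  exact ⟨L, lt_of_lt_of_le (half_pos hδpos) hLpos, htendsum⟩
end

section
/- Fix a real number c > 0 and an integer α ≥ 2. Then the Lebesgue integral ∫₀^∞ (e^{−u/c} − e^{−1/c})/(1 − u^α) du is strictly positive. -/
open MeasureTheory Set

private lemma exp_sub_exp_le {a b : ℝ} (hab : a ≤ b) (hb : b ≤ 0) :
    Real.exp b - Real.exp a ≤ b - a := by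
  have h1 : Real.exp b * ((a - b) + 1) ≤ Real.exp a := by
    calc Real.exp b * ((a - b) + 1) ≤ Real.exp b * Real.exp (a - b) :=
          mul_le_mul_of_nonneg_left (Real.add_one_le_exp (a - b)) (Real.exp_pos b).le
      _ = Real.exp a := by rw [← Real.exp_add]; ring_nf
  have h2 : Real.exp b ≤ 1 := Real.exp_le_one_iff.mpr hb
  nlinarith [Real.exp_pos b]

private lemma abs_one_sub_le {α : ℕ} (hα : 2 ≤ α) {u : ℝ} (hu : 0 ≤ u) :
    |1 - u| ≤ |1 - u ^ α| := by
  have hg : (∑ i ∈ Finset.range α, u ^ i) * (u - 1) = u ^ α - 1 := geom_sum_mul u α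
  have hs : (1 : ℝ) ≤ ∑ i ∈ Finset.range α, u ^ i := by
    have h0 : (0 : ℕ) ∈ Finset.range α := Finset.mem_range.mpr (by omega)
    calc (1:ℝ) = u ^ 0 := (pow_zero u).symm
      _ ≤ ∑ i ∈ Finset.range α, u ^ i :=
          Finset.single_le_sum (fun i _ => pow_nonneg hu i) h0
  have : |1 - u ^ α| = |∑ i ∈ Finset.range α, u ^ i| * |u - 1| := by
    rw [← abs_mul, hg, abs_sub_comm]
  rw [this, abs_sub_comm 1 u]
  calc |u - 1| = 1 * |u - 1| := (one_mul _).symm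
    _ ≤ |∑ i ∈ Finset.range α, u ^ i| * |u - 1| := by
        apply mul_le_mul_of_nonneg_right _ (abs_nonneg _)
        rw [abs_of_nonneg (by linarith)]; exact hs

/-- Fix a real `c > 0` and an integer `α ≥ 2`. Then the Lebesgue integral
`∫₀^∞ (e^{−u/c} − e^{−1/c})/(1 − u^α) du` is strictly positive. -/
theorem integral_exp_sub_exp_div_one_sub_pow_pos
    (c : ℝ) (hc : 0 < c) (α : ℕ) (hα : 2 ≤ α) :
    0 < ∫ u in Set.Ioi (0:ℝ), (Real.exp (-u / c) - Real.exp (-1 / c)) / (1 - u ^ α) := by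
  set f : ℝ → ℝ := fun u => (Real.exp (-u / c) - Real.exp (-1 / c)) / (1 - u ^ α) with hf
  have hmeas : Measurable f := by
    apply Measurable.div
    · exact ((measurable_id.neg.div_const c).exp.sub measurable_const)
    · exact measurable_const.sub (measurable_id.pow_const α)
  -- numerator bound: |e^{-u/c} - e^{-1/c}| ≤ |1-u|/c for u ≥ 0
  have hnum : ∀ u : ℝ, 0 ≤ u → |Real.exp (-u / c) - Real.exp (-1 / c)| ≤ |1 - u| / c := by
    intro u hu
    rcases le_total u 1 with h | h
    · have h1 : -1 / c ≤ -u / c := (div_le_div_iff_of_pos_right hc).mpr (by linarith)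
      have h2 : -u / c ≤ 0 := div_nonpos_of_nonpos_of_nonneg (by linarith) hc.le
      have := exp_sub_exp_le h1 h2
      rw [abs_of_nonneg (by
        have := Real.exp_le_exp.mpr h1; linarith)]
      rw [abs_of_nonneg (by linarith)]
      have : Real.exp (-u / c) - Real.exp (-1 / c) ≤ -u / c - -1 / c := this
      calc Real.exp (-u / c) - Real.exp (-1 / c) ≤ -u / c - -1 / c := this
        _ = (1 - u) / c := by ring
    · have h1 : -u / c ≤ -1 / c := (div_le_div_iff_of_pos_right hc).mpr (by linarith)
      have h2 : -1 / c ≤ 0 := div_nonpos_of_nonpos_of_nonneg (by norm_num) hc.le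
      have := exp_sub_exp_le h1 h2
      rw [abs_sub_comm, abs_of_nonneg (by
        have := Real.exp_le_exp.mpr h1; linarith)]
      rw [abs_of_nonpos (by linarith), neg_sub]
      calc Real.exp (-1 / c) - Real.exp (-u / c) ≤ -1 / c - -u / c := this
        _ = (u - 1) / c := by ring
  -- global bound |f u| ≤ 1/c for u ≥ 0
  have hbound : ∀ u : ℝ, 0 ≤ u → |f u| ≤ 1 / c := by
    intro u hu
    by_cases h1 : u = 1
    · simp [hf, h1, hc.le, le_of_lt (by positivity : (0:ℝ) < 1/c)]
    · have hden : (0:ℝ) < |1 - u| := by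
        rw [abs_pos]; intro h; apply h1; linarith
      have hden' : |1 - u| ≤ |1 - u ^ α| := abs_one_sub_le hα hu
      have : |f u| = |Real.exp (-u / c) - Real.exp (-1 / c)| / |1 - u ^ α| := abs_div _ _
      rw [this]
      calc |Real.exp (-u / c) - Real.exp (-1 / c)| / |1 - u ^ α|
          ≤ (|1 - u| / c) / |1 - u| :=
            div_le_div₀ (by positivity) (hnum u hu) hden hden'
        _ = 1 / c := by field_simp
  -- integrable on Ioc 0 2
  have hint1 : IntegrableOn f (Ioc 0 2) := by
    apply Integrable.mono' (integrable_const (1 / c)) hmeas.aestronglyMeasurable.restrict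
    filter_upwards [ae_restrict_mem measurableSet_Ioc] with u hu
    rw [Real.norm_eq_abs]
    exact hbound u hu.1.le
  -- integrable on Ioi 2
  have hint2 : IntegrableOn f (Ioi 2) := by
    have hg : IntegrableOn (fun u : ℝ => 2 * u ^ (-2 : ℝ)) (Ioi 2) :=
      (integrableOn_Ioi_rpow_of_lt (by norm_num) (by norm_num)).const_mul 2
    apply Integrable.mono' hg hmeas.aestronglyMeasurable.restrict
    filter_upwards [ae_restrict_mem measurableSet_Ioi] with u hu
    have hu2 : (2:ℝ) < u := hu
    have hu0 : (0:ℝ) < u := by linarith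
    have hpow : u ^ 2 ≤ u ^ α := pow_le_pow_right₀ (by linarith) hα
    have hd : u ^ 2 / 2 ≤ |1 - u ^ α| := by
      rw [abs_of_nonpos (by nlinarith), neg_sub]
      nlinarith
    have hn : |Real.exp (-u / c) - Real.exp (-1 / c)| ≤ 1 := by
      have e1 := Real.exp_pos (-u / c)
      have e2 := Real.exp_pos (-1 / c)
      have e3 : Real.exp (-u / c) ≤ 1 := Real.exp_le_one_iff.mpr
        (div_nonpos_of_nonpos_of_nonneg (by linarith) hc.le)
      have e4 : Real.exp (-1 / c) ≤ 1 := Real.exp_le_one_iff.mpr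
        (div_nonpos_of_nonpos_of_nonneg (by norm_num) hc.le)
      rw [abs_le]; constructor <;> linarith
    rw [Real.norm_eq_abs, abs_div]
    have hr : u ^ (-2 : ℝ) = (u ^ 2)⁻¹ := by
      rw [show ((-2:ℝ)) = -((2:ℕ):ℝ) by norm_num, Real.rpow_neg hu0.le, Real.rpow_natCast]
    rw [hr]
    calc |Real.exp (-u / c) - Real.exp (-1 / c)| / |1 - u ^ α|
        ≤ 1 / (u ^ 2 / 2) := div_le_div₀ (by norm_num) hn (by positivity) hd
      _ = 2 * (u ^ 2)⁻¹ := by field_simp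
  have hint : IntegrableOn f (Ioi 0) := by
    rw [← Ioc_union_Ioi_eq_Ioi (by norm_num : (0:ℝ) ≤ 2)]
    exact hint1.union hint2
  -- nonnegativity
  have hnonneg : ∀ u : ℝ, 0 ≤ u → 0 ≤ f u := by
    intro u hu
    rcases le_total u 1 with h | h
    · apply div_nonneg
      · have h1 : -1 / c ≤ -u / c := (div_le_div_iff_of_pos_right hc).mpr (by linarith)
        have := Real.exp_le_exp.mpr h1
        linarith
      · have : u ^ α ≤ 1 := pow_le_one₀ hu h
        linarith
    · apply div_nonneg_of_nonpos
      · have h1 : -u / c ≤ -1 / c := (div_le_div_iff_of_pos_right hc).mpr (by linarith)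
        have := Real.exp_le_exp.mpr h1
        linarith
      · have : (1:ℝ) ≤ u ^ α := one_le_pow₀ h
        linarith
  -- strict positivity on (0,1)
  have hpos : ∀ u ∈ Ioo (0:ℝ) 1, 0 < f u := by
    intro u hu
    apply div_pos
    · have h1 : -1 / c < -u / c := (div_lt_div_iff_of_pos_right hc).mpr (by linarith [hu.2])
      have := Real.exp_lt_exp.mpr h1
      linarith
    · have : u ^ α < 1 := pow_lt_one₀ hu.1.le hu.2 (by omega)
      linarith
  have hae : 0 ≤ᶠ[ae (volume.restrict (Ioi 0))] f := by
    filter_upwards [ae_restrict_mem measurableSet_Ioi] with u hu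
    exact hnonneg u (le_of_lt hu)
  rw [setIntegral_pos_iff_support_of_nonneg_ae hae hint]
  calc (0:ENNReal) < volume (Ioo (0:ℝ) 1) := by simp [Real.volume_Ioo]
    _ ≤ volume (Function.support f ∩ Ioi 0) := by
        apply measure_mono
        intro u hu
        exact ⟨ne_of_gt (hpos u hu), hu.1⟩
end

section
/- Let g > 0 and A > 0 be real numbers and let α ≥ 2 be an integer. Then the Cauchy principal value PV ∫₀^∞ e^{−S/g^{1/α}}/(1 − A·S^α) dS, taken at the pole S₀ = A^{−1/α}, exists and is strictly positive; that is, there exists L > 0 such that lim_{ε→0⁺} ( ∫₀^{(1−ε)·A^{−1/α}} e^{−S/g^{1/α}}/(1 − A·S^α) dS + ∫_{(1+ε)·A^{−1/α}}^∞ e^{−S/g^{1/α}}/(1 − A·S^α) dS ) = L. -/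
open MeasureTheory Filter Set

namespace PVAux

noncomputable def phi (σ k : ℝ) (α : ℕ) (v : ℝ) : ℝ :=
  σ * Real.exp v * (Real.exp (-(k * Real.exp v)) / (1 - Real.exp (α * v)))

noncomputable def psi (σ k : ℝ) (α : ℕ) (v : ℝ) : ℝ :=
  phi σ k α (-v) + phi σ k α v

lemma den_pos {α : ℕ} (hα : 2 ≤ α) {v : ℝ} (hv : 0 < v) :
    0 < 1 - Real.exp (-((α : ℝ) * v)) := by
  have hαv : 0 < (α : ℝ) * v := by
    have : (0:ℝ) < α := by exact_mod_cast Nat.lt_of_lt_of_le Nat.zero_lt_two hα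
    positivity
  have := Real.exp_lt_one_iff.mpr (neg_lt_zero.mpr hαv)
  linarith

lemma psi_eq (σ k : ℝ) {α : ℕ} (hα : 2 ≤ α) {v : ℝ} (hv : 0 < v) :
    psi σ k α v = σ * (Real.exp (-v - k * Real.exp (-v)) -
      Real.exp ((1 - α) * v - k * Real.exp v)) / (1 - Real.exp (-((α : ℝ) * v))) := by
  have hD := den_pos hα hv
  have hD' : (1 : ℝ) - Real.exp (-((α : ℝ) * v)) ≠ 0 := ne_of_gt hD
  have h1 : 1 - Real.exp ((α : ℝ) * v) =
      -(Real.exp ((α : ℝ) * v) * (1 - Real.exp (-((α : ℝ) * v)))) := by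
    rw [mul_sub, mul_one, ← Real.exp_add]
    simp
  have hE : Real.exp ((α : ℝ) * v) ≠ 0 := (Real.exp_pos _).ne'
  rw [psi, phi, phi, h1]
  have e1 : Real.exp (-v - k * Real.exp (-v)) = Real.exp (-v) * Real.exp (-(k * Real.exp (-v))) := by
    rw [← Real.exp_add]; ring_nf
  have e2 : Real.exp ((1 - (α:ℝ)) * v - k * Real.exp v) * Real.exp ((α : ℝ) * v)
      = Real.exp v * Real.exp (-(k * Real.exp v)) := by
    rw [← Real.exp_add, ← Real.exp_add]; ring_nf
  have hav : (α : ℝ) * -v = -((α : ℝ) * v) := by ring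
  have e2' : Real.exp ((1 - (α:ℝ)) * v - k * Real.exp v)
      = Real.exp v * Real.exp (-(k * Real.exp v)) / Real.exp ((α : ℝ) * v) := by
    rw [eq_div_iff hE, e2]
  rw [hav, e2', e1]
  field_simp
  ring

lemma psi_pos {σ k : ℝ} (hσ : 0 < σ) (hk : 0 < k) {α : ℕ} (hα : 2 ≤ α)
    {v : ℝ} (hv : 0 < v) : 0 < psi σ k α v := by
  rw [psi_eq σ k hα hv]
  apply div_pos _ (den_pos hα hv)
  apply mul_pos hσ
  rw [sub_pos, Real.exp_lt_exp]
  have hα2 : (2:ℝ) ≤ α := by exact_mod_cast hα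
  have hEE : Real.exp (-v) < Real.exp v := Real.exp_lt_exp.mpr (by linarith)
  nlinarith

/-- `1 - exp (-x) ≤ x` -/
lemma one_sub_exp_neg_le (x : ℝ) : 1 - Real.exp (-x) ≤ x := by
  linarith [Real.add_one_le_exp (-x)]

/-- `x/(1+x) ≤ 1 - exp (-x)` for `0 ≤ x` -/
lemma one_sub_exp_neg_ge {x : ℝ} (hx : 0 ≤ x) : x / (1 + x) ≤ 1 - Real.exp (-x) := by
  have h1 : Real.exp (-x) ≤ (1 + x)⁻¹ := by
    rw [Real.exp_neg]
    exact inv_anti₀ (by linarith) (Real.add_one_le_exp x |>.trans_eq' (by ring))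
  have h2 : x / (1 + x) = 1 - (1 + x)⁻¹ := by
    field_simp
    ring
  linarith

lemma psi_le {σ k : ℝ} (hσ : 0 < σ) (hk : 0 < k) {α : ℕ} (hα : 2 ≤ α)
    {v : ℝ} (hv : 0 < v) (hv1 : v ≤ 1) :
    psi σ k α v ≤ 2 * σ * (α + 2 * Real.exp 1 * k) := by
  have hα2 : (2:ℝ) ≤ α := by exact_mod_cast hα
  rw [psi_eq σ k hα hv]
  set x₁ := -v - k * Real.exp (-v) with hx₁
  set x₂ := (1 - (α:ℝ)) * v - k * Real.exp v with hx₂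
  have hEv : Real.exp (-v) < Real.exp v := Real.exp_lt_exp.mpr (by linarith)
  have hx21 : x₂ ≤ x₁ := by rw [hx₁, hx₂]; nlinarith
  have hx10 : x₁ ≤ 0 := by
    have := (Real.exp_pos (-v)).le
    rw [hx₁]; nlinarith
  -- numerator bound
  have hN : Real.exp x₁ - Real.exp x₂ ≤ x₁ - x₂ := by
    have h1 : Real.exp x₁ ≤ 1 := Real.exp_le_one_iff.mpr hx10
    have h2 : Real.exp x₁ - Real.exp x₂ = Real.exp x₁ * (1 - Real.exp (x₂ - x₁)) := by
      rw [mul_sub, mul_one, ← Real.exp_add]; ring_nf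
    have h3 : 1 - Real.exp (x₂ - x₁) ≤ x₁ - x₂ := by
      have := one_sub_exp_neg_le (x₁ - x₂)
      rw [neg_sub] at this; linarith
    have h4 : 0 ≤ 1 - Real.exp (x₂ - x₁) := by
      have : Real.exp (x₂ - x₁) ≤ 1 := Real.exp_le_one_iff.mpr (by linarith)
      linarith
    nlinarith
  -- `x₁ - x₂ ≤ v * ((α - 2) + 2 * e * k)`
  have hEe : Real.exp v ≤ Real.exp 1 := Real.exp_le_exp.mpr hv1
  have hE1 : (1:ℝ) ≤ Real.exp 1 := by linarith [Real.add_one_le_exp (1:ℝ)]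
  have hEsinh : Real.exp v - Real.exp (-v) ≤ 2 * Real.exp 1 * v := by
    have h5 : 1 - Real.exp (-v) ≤ v := one_sub_exp_neg_le v
    have h6 : Real.exp v * (1 - Real.exp (-v)) = Real.exp v - 1 := by
      rw [mul_sub, mul_one, ← Real.exp_add]; simp
    nlinarith [Real.exp_pos v]
  have hx12 : x₁ - x₂ ≤ v * (((α:ℝ) - 2) + 2 * Real.exp 1 * k) := by
    rw [hx₁, hx₂]; nlinarith
  -- denominator bound
  have hD : 2 / 3 * v ≤ 1 - Real.exp (-((α:ℝ) * v)) := by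
    have h7 : Real.exp (-((α:ℝ) * v)) ≤ Real.exp (-(2 * v)) :=
      Real.exp_le_exp.mpr (by nlinarith)
    have h8 := one_sub_exp_neg_ge (by linarith : (0:ℝ) ≤ 2 * v)
    have h9 : 2 / 3 * v ≤ 2 * v / (1 + 2 * v) := by
      rw [show (2:ℝ) / 3 * v = 2 * v / 3 by ring,
        div_le_div_iff₀ (by norm_num) (by linarith)]
      nlinarith
    linarith
  have hDpos := den_pos hα hv
  have hnum : σ * (Real.exp x₁ - Real.exp x₂) ≤ σ * (v * (((α:ℝ) - 2) + 2 * Real.exp 1 * k)) := by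
    apply mul_le_mul_of_nonneg_left _ hσ.le
    linarith
  calc σ * (Real.exp x₁ - Real.exp x₂) / (1 - Real.exp (-((α:ℝ) * v)))
      ≤ σ * (v * (((α:ℝ) - 2) + 2 * Real.exp 1 * k)) / (2 / 3 * v) := by
        apply div_le_div₀ _ hnum (by positivity) hD
        nlinarith [Real.exp_pos 1]
    _ = 3 / 2 * σ * (((α:ℝ) - 2) + 2 * Real.exp 1 * k) := by
        field_simp
    _ ≤ 2 * σ * (α + 2 * Real.exp 1 * k) := by nlinarith

lemma contP {σ k : ℝ} {α : ℕ} (hα : 2 ≤ α) :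
    ContinuousOn (phi σ k α) (Set.Ioi 0) := by
  apply ContinuousOn.mul (by fun_prop)
  apply ContinuousOn.div (by fun_prop) (by fun_prop)
  intro v hv
  have h1 : (1:ℝ) < Real.exp ((α:ℝ) * v) := by
    rw [Real.one_lt_exp_iff]
    have hα0 : (0:ℝ) < α := by exact_mod_cast Nat.lt_of_lt_of_le Nat.zero_lt_two hα
    have := mem_Ioi.mp hv
    nlinarith
  linarith

lemma contM {σ k : ℝ} {α : ℕ} (hα : 2 ≤ α) :
    ContinuousOn (fun v => phi σ k α (-v)) (Set.Ioi 0) := by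
  unfold phi
  apply ContinuousOn.mul (by fun_prop)
  apply ContinuousOn.div (by fun_prop) (by fun_prop)
  intro v hv
  have h1 : Real.exp ((α:ℝ) * -v) < 1 := by
    rw [Real.exp_lt_one_iff]
    have hα0 : (0:ℝ) < α := by exact_mod_cast Nat.lt_of_lt_of_le Nat.zero_lt_two hα
    have := mem_Ioi.mp hv
    nlinarith
  linarith

lemma exp_mul_exp_le {k : ℝ} (hk : 0 < k) (v : ℝ) :
    Real.exp v * Real.exp (-(k * Real.exp v)) ≤ 27 / k ^ 3 * Real.exp (-(2 * v)) := by
  set t := k * Real.exp v with hts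
  have ht : 0 < t := by positivity
  have h13 : t / 3 ≤ Real.exp (t / 3) := by linarith [Real.add_one_le_exp (t / 3)]
  have h3 : (t / 3) ^ 3 ≤ Real.exp (t / 3) ^ 3 := pow_le_pow_left₀ (by positivity) h13 3
  have hE3 : Real.exp (t / 3) ^ 3 = Real.exp t := by
    rw [← Real.exp_nat_mul]; norm_num; ring_nf
  have ht27 : t ^ 3 ≤ 27 * Real.exp t := by rw [hE3] at h3; nlinarith
  have hprod : Real.exp t * Real.exp (-t) = 1 := by rw [← Real.exp_add]; simp
  have hkey : t ^ 3 * Real.exp (-t) ≤ 27 := by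
    nlinarith [mul_le_mul_of_nonneg_right ht27 (Real.exp_pos (-t)).le]
  rw [div_mul_eq_mul_div, le_div_iff₀ (by positivity : (0:ℝ) < k ^ 3),
    ← mul_le_mul_iff_of_pos_right (Real.exp_pos (2 * v))]
  have expand : Real.exp v * Real.exp (-t) * k ^ 3 * Real.exp (2 * v) = t ^ 3 * Real.exp (-t) := by
    rw [hts, show (2:ℝ) * v = v + v by ring, Real.exp_add]; ring
  rw [expand]
  calc t ^ 3 * Real.exp (-t) ≤ 27 := hkey
    _ = 27 * Real.exp (-(2 * v)) * Real.exp (2 * v) := by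
        rw [mul_assoc, ← Real.exp_add]; simp

lemma intP {σ k : ℝ} (hσ : 0 < σ) (hk : 0 < k) {α : ℕ} (hα : 2 ≤ α)
    {t : ℝ} (ht : 0 < t) : IntegrableOn (phi σ k α) (Set.Ioi t) := by
  have hα0 : (0:ℝ) < α := by exact_mod_cast Nat.lt_of_lt_of_le Nat.zero_lt_two hα
  have hdt : 0 < Real.exp ((α:ℝ) * t) - 1 := by
    rw [sub_pos, Real.one_lt_exp_iff]; positivity
  set C := σ * (27 / k ^ 3) / (Real.exp ((α:ℝ) * t) - 1) with hC
  apply Integrable.mono' ((exp_neg_integrableOn_Ioi t one_pos).const_mul C)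
  · exact ((contP hα).mono (Set.Ioi_subset_Ioi ht.le)).aestronglyMeasurable measurableSet_Ioi
  · rw [ae_restrict_iff' measurableSet_Ioi]
    apply ae_of_all
    intro v hv
    have htv : t < v := hv
    have hv0 : 0 < v := ht.trans htv
    have hd : 1 - Real.exp ((α:ℝ) * v) < 0 := by
      rw [sub_neg, Real.one_lt_exp_iff]; positivity
    have habs : ‖phi σ k α v‖ = σ * Real.exp v * (Real.exp (-(k * Real.exp v)) /
        (Real.exp ((α:ℝ) * v) - 1)) := by
      rw [phi, Real.norm_eq_abs, abs_mul, abs_div, abs_of_pos (by positivity),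
        abs_of_pos (Real.exp_pos _), abs_of_neg hd, neg_sub]
    rw [habs]
    have hmono : Real.exp ((α:ℝ) * t) - 1 ≤ Real.exp ((α:ℝ) * v) - 1 := by
      have := Real.exp_le_exp.mpr (by nlinarith : (α:ℝ) * t ≤ (α:ℝ) * v)
      linarith
    have h1 : σ * Real.exp v * (Real.exp (-(k * Real.exp v)) / (Real.exp ((α:ℝ) * v) - 1))
        = σ * (Real.exp v * Real.exp (-(k * Real.exp v))) / (Real.exp ((α:ℝ) * v) - 1) := by
      ring
    rw [h1]
    calc σ * (Real.exp v * Real.exp (-(k * Real.exp v))) / (Real.exp ((α:ℝ) * v) - 1)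
        ≤ σ * (27 / k ^ 3 * Real.exp (-(2 * v))) / (Real.exp ((α:ℝ) * t) - 1) := by
          apply div_le_div₀ (by positivity)
            (mul_le_mul_of_nonneg_left (exp_mul_exp_le hk v) hσ.le) hdt hmono
      _ = C * Real.exp (-(2 * v)) := by rw [hC]; ring
      _ ≤ C * Real.exp (-1 * v) := by
          apply mul_le_mul_of_nonneg_left (Real.exp_le_exp.mpr (by linarith))
          positivity

lemma intM {σ k : ℝ} (hσ : 0 < σ) (hk : 0 < k) {α : ℕ} (hα : 2 ≤ α)
    {t : ℝ} (ht : 0 < t) : IntegrableOn (fun v => phi σ k α (-v)) (Set.Ioi t) := by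
  have hα0 : (0:ℝ) < α := by exact_mod_cast Nat.lt_of_lt_of_le Nat.zero_lt_two hα
  have hdt : 0 < 1 - Real.exp (-((α:ℝ) * t)) := den_pos hα ht
  set C := σ / (1 - Real.exp (-((α:ℝ) * t))) with hC
  apply Integrable.mono' ((exp_neg_integrableOn_Ioi t one_pos).const_mul C)
  · exact ((contM hα).mono (Set.Ioi_subset_Ioi ht.le)).aestronglyMeasurable measurableSet_Ioi
  · rw [ae_restrict_iff' measurableSet_Ioi]
    apply ae_of_all
    intro v hv
    have htv : t < v := hv
    have hv0 : 0 < v := ht.trans htv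
    have hav : (α:ℝ) * -v = -((α:ℝ) * v) := by ring
    have hdv : 0 < 1 - Real.exp (-((α:ℝ) * v)) := den_pos hα hv0
    have hX : Real.exp (-(k * Real.exp (-v))) ≤ 1 :=
      Real.exp_le_one_iff.mpr (by nlinarith [Real.exp_pos (-v)])
    have habs : ‖phi σ k α (-v)‖ = σ * Real.exp (-v) * (Real.exp (-(k * Real.exp (-v))) /
        (1 - Real.exp (-((α:ℝ) * v)))) := by
      rw [phi, hav, Real.norm_eq_abs, abs_of_nonneg (by positivity)]
    rw [habs]
    have hmono : 1 - Real.exp (-((α:ℝ) * t)) ≤ 1 - Real.exp (-((α:ℝ) * v)) := by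
      have := Real.exp_le_exp.mpr (by nlinarith : -((α:ℝ) * v) ≤ -((α:ℝ) * t))
      linarith
    calc σ * Real.exp (-v) * (Real.exp (-(k * Real.exp (-v))) / (1 - Real.exp (-((α:ℝ) * v))))
        ≤ σ * Real.exp (-v) * (1 / (1 - Real.exp (-((α:ℝ) * t)))) := by
          apply mul_le_mul_of_nonneg_left (div_le_div₀ zero_le_one hX hdt hmono)
          positivity
      _ = C * Real.exp (-1 * v) := by rw [hC, neg_one_mul]; ring

lemma measurable_psi (σ k : ℝ) (α : ℕ) : Measurable (psi σ k α) := by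
  unfold psi phi
  fun_prop

lemma int_psi_Ioi {σ k : ℝ} (hσ : 0 < σ) (hk : 0 < k) {α : ℕ} (hα : 2 ≤ α)
    {t : ℝ} (ht : 0 < t) : IntegrableOn (psi σ k α) (Set.Ioi t) :=
  (intM hσ hk hα ht).add (intP hσ hk hα ht)

lemma int_psi_Ioc {σ k : ℝ} (hσ : 0 < σ) (hk : 0 < k) {α : ℕ} (hα : 2 ≤ α) :
    IntegrableOn (psi σ k α) (Set.Ioc 0 1) := by
  apply Measure.integrableOn_of_bounded (M := 2 * σ * (α + 2 * Real.exp 1 * k))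
    measure_Ioc_lt_top.ne (measurable_psi σ k α).aestronglyMeasurable
  rw [ae_restrict_iff' measurableSet_Ioc]
  apply ae_of_all
  intro v hv
  rw [Real.norm_eq_abs, abs_of_nonneg (psi_pos hσ hk hα hv.1).le]
  exact psi_le hσ hk hα hv.1 hv.2

lemma int_psi_Ioi0 {σ k : ℝ} (hσ : 0 < σ) (hk : 0 < k) {α : ℕ} (hα : 2 ≤ α) :
    IntegrableOn (psi σ k α) (Set.Ioi 0) := by
  rw [← Set.Ioc_union_Ioi_eq_Ioi (zero_le_one (α := ℝ))]
  exact (int_psi_Ioc hσ hk hα).union (int_psi_Ioi hσ hk hα one_pos)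

lemma integral_psi_pos {σ k : ℝ} (hσ : 0 < σ) (hk : 0 < k) {α : ℕ} (hα : 2 ≤ α) :
    0 < ∫ v in Set.Ioi 0, psi σ k α v := by
  rw [setIntegral_pos_iff_support_of_nonneg_ae]
  · apply lt_of_lt_of_le _ (measure_mono
      (fun v hv => ⟨(psi_pos hσ hk hα hv).ne', hv⟩ :
        Set.Ioi (0:ℝ) ⊆ Function.support (psi σ k α) ∩ Set.Ioi 0))
    rw [Real.volume_Ioi]
    exact ENNReal.zero_lt_top
  · rw [EventuallyLE, ae_restrict_iff' measurableSet_Ioi]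
    apply ae_of_all
    intro v hv
    simpa using (psi_pos hσ hk hα hv).le
  · exact int_psi_Ioi0 hσ hk hα

lemma tendsto_tail {σ k : ℝ} (hσ : 0 < σ) (hk : 0 < k) {α : ℕ} (hα : 2 ≤ α) :
    Tendsto (fun t => ∫ v in Set.Ioi t, psi σ k α v) (nhdsWithin 0 (Set.Ioi 0))
      (nhds (∫ v in Set.Ioi 0, psi σ k α v)) := by
  have hev : ∀ᶠ t in nhdsWithin (0:ℝ) (Set.Ioi 0), t ∈ Set.Ioc (0:ℝ) 1 :=
    Ioc_mem_nhdsGT_of_mem (by norm_num)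
  have hsplit : ∀ t ∈ Set.Ioc (0:ℝ) 1, (∫ v in Set.Ioi t, psi σ k α v)
      = (∫ v in Set.Ioi 0, psi σ k α v) - ∫ v in Set.Ioc 0 t, psi σ k α v := by
    intro t ht
    have h := setIntegral_union (μ := volume) (Set.Ioc_disjoint_Ioi le_rfl) measurableSet_Ioi
      ((int_psi_Ioi0 hσ hk hα).mono_set Set.Ioc_subset_Ioi_self)
      ((int_psi_Ioi0 hσ hk hα).mono_set (Set.Ioi_subset_Ioi ht.1.le))
    rw [Set.Ioc_union_Ioi_eq_Ioi ht.1.le] at h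
    linarith
  have hzero : Tendsto (fun t => ∫ v in Set.Ioc 0 t, psi σ k α v)
      (nhdsWithin 0 (Set.Ioi 0)) (nhds 0) := by
    set M := 2 * σ * ((α:ℝ) + 2 * Real.exp 1 * k) with hM
    have hM0 : 0 ≤ M := by rw [hM]; positivity
    apply squeeze_zero_norm' (a := fun t : ℝ => M * t)
    · filter_upwards [hev] with t ht
      have hb : ‖∫ v in Set.Ioc 0 t, psi σ k α v‖ ≤ M * (volume (Set.Ioc (0:ℝ) t)).toReal := by
        apply norm_setIntegral_le_of_norm_le_const measure_Ioc_lt_top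
        · intro v hv
          rw [Real.norm_eq_abs, abs_of_nonneg (psi_pos hσ hk hα hv.1).le]
          exact psi_le hσ hk hα hv.1 (hv.2.trans ht.2)
      rw [Real.volume_Ioc] at hb
      calc ‖∫ v in Set.Ioc 0 t, psi σ k α v‖ ≤ M * (ENNReal.ofReal (t - 0)).toReal := hb
        _ = M * t := by rw [ENNReal.toReal_ofReal (by linarith [ht.1])]; ring
    · have : Tendsto (fun t : ℝ => M * t) (nhds 0) (nhds 0) := by
        simpa using (continuous_mul_left M).tendsto (0:ℝ)
      exact this.mono_left nhdsWithin_le_nhds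
  apply Tendsto.congr' (f₁ := fun t => (∫ v in Set.Ioi 0, psi σ k α v)
    - ∫ v in Set.Ioc 0 t, psi σ k α v)
  · filter_upwards [hev] with t ht using (hsplit t ht).symm
  · simpa using tendsto_const_nhds.sub hzero

lemma image_mul_exp_Ioi {σ : ℝ} (hσ : 0 < σ) (t : ℝ) :
    (fun v => σ * Real.exp v) '' Set.Ioi t = Set.Ioi (σ * Real.exp t) := by
  ext x
  simp only [Set.mem_image, Set.mem_Ioi]
  constructor
  · rintro ⟨v, hv, rfl⟩
    exact mul_lt_mul_of_pos_left (Real.exp_lt_exp.mpr hv) hσ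
  · intro hx
    have hx0 : 0 < x := lt_trans (by positivity) hx
    refine ⟨Real.log (x / σ), ?_, ?_⟩
    · rw [Real.lt_log_iff_exp_lt (by positivity)]
      rw [lt_div_iff₀ hσ, mul_comm]
      exact hx
    · rw [Real.exp_log (by positivity)]
      field_simp
  -- done

lemma image_mul_exp_neg_Ioi {σ : ℝ} (hσ : 0 < σ) (t : ℝ) :
    (fun v => σ * Real.exp (-v)) '' Set.Ioi t = Set.Ioo 0 (σ * Real.exp (-t)) := by
  ext x
  simp only [Set.mem_image, Set.mem_Ioi, Set.mem_Ioo]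
  constructor
  · rintro ⟨v, hv, rfl⟩
    exact ⟨by positivity, mul_lt_mul_of_pos_left (Real.exp_lt_exp.mpr (by linarith)) hσ⟩
  · rintro ⟨hx0, hxlt⟩
    refine ⟨-Real.log (x / σ), ?_, ?_⟩
    · have h1 : x / σ < Real.exp (-t) := by
        rw [div_lt_iff₀ hσ, mul_comm]
        exact hxlt
      have h2 : Real.log (x / σ) < -t :=
        (Real.log_lt_iff_lt_exp (by positivity)).mpr h1
      linarith
    · rw [neg_neg, Real.exp_log (by positivity)]
      field_simp

lemma sub_plus {σ : ℝ} (hσ : 0 < σ) (f : ℝ → ℝ) (t : ℝ) :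
    ∫ S in Set.Ioi (σ * Real.exp t), f S
      = ∫ v in Set.Ioi t, (σ * Real.exp v) * f (σ * Real.exp v) := by
  rw [← image_mul_exp_Ioi hσ t]
  rw [integral_image_eq_integral_abs_deriv_smul measurableSet_Ioi
    (fun v _ => ((Real.hasDerivAt_exp v).const_mul σ).hasDerivWithinAt)
    (fun a _ c _ h => Real.exp_injective (mul_left_cancel₀ hσ.ne' h)) f]
  apply setIntegral_congr_fun measurableSet_Ioi
  intro v _
  dsimp only
  rw [smul_eq_mul, abs_of_pos (by positivity)]

lemma sub_minus {σ : ℝ} (hσ : 0 < σ) (f : ℝ → ℝ) (t : ℝ) :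
    ∫ S in Set.Ioo 0 (σ * Real.exp (-t)), f S
      = ∫ v in Set.Ioi t, (σ * Real.exp (-v)) * f (σ * Real.exp (-v)) := by
  rw [← image_mul_exp_neg_Ioi hσ t]
  have hderiv : ∀ v ∈ Set.Ioi t, HasDerivWithinAt (fun v => σ * Real.exp (-v))
      (-(σ * Real.exp (-v))) (Set.Ioi t) v := by
    intro v _
    have h := (((Real.hasDerivAt_exp (-v)).comp v (hasDerivAt_neg v)).const_mul σ)
    simpa [mul_comm, mul_assoc, mul_left_comm] using h.hasDerivWithinAt
  rw [integral_image_eq_integral_abs_deriv_smul measurableSet_Ioi hderiv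
    (fun a _ c _ h => by
      have := Real.exp_injective (mul_left_cancel₀ hσ.ne' h)
      linarith [neg_injective this]) f]
  apply setIntegral_congr_fun measurableSet_Ioi
  intro v _
  dsimp only
  rw [smul_eq_mul, abs_neg, abs_of_pos (by positivity)]

end PVAux

set_option maxHeartbeats 2000000 in
open PVAux in
/-- Let `g > 0`, `A > 0` be real and `α ≥ 2` an integer. Then the Cauchy principal value
`PV ∫₀^∞ e^{−S/g^{1/α}}/(1 − A·S^α) dS`, taken at the pole `S₀ = A^{−1/α}`, exists and is
strictly positive: there is `L > 0` such that the limit as `ε → 0⁺` of the sum of the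
integrals over `(0, (1−ε)·A^{−1/α})` and `((1+ε)·A^{−1/α}, ∞)` equals `L`. -/
theorem pv_borel_integral_exists_pos
    (g A : ℝ) (hg : 0 < g) (hA : 0 < A) (α : ℕ) (hα : 2 ≤ α) :
    ∃ L : ℝ, 0 < L ∧
      Tendsto (fun ε : ℝ =>
          (∫ S in (0:ℝ)..((1 - ε) * A ^ (-(1:ℝ) / α)),
              Real.exp (-S / g ^ ((1:ℝ) / α)) / (1 - A * S ^ α)) +
            ∫ S in Set.Ioi ((1 + ε) * A ^ (-(1:ℝ) / α)),
              Real.exp (-S / g ^ ((1:ℝ) / α)) / (1 - A * S ^ α))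
        (nhdsWithin 0 (Set.Ioi 0)) (nhds L) := by
  have hαR : (0:ℝ) < α := by exact_mod_cast Nat.lt_of_lt_of_le Nat.zero_lt_two hα
  set b := g ^ ((1:ℝ) / α) with hb_def
  have hb : 0 < b := Real.rpow_pos_of_pos hg _
  set σ := A ^ (-(1:ℝ) / α) with hσ_def
  have hσ : 0 < σ := Real.rpow_pos_of_pos hA _
  set k := σ / b with hk_def
  have hk : 0 < k := div_pos hσ hb
  have hAσ : A * σ ^ α = 1 := by
    have h1 : σ ^ α = A ^ ((-(1:ℝ) / α) * α) := by
      rw [hσ_def, ← Real.rpow_natCast (A ^ (-(1:ℝ) / (α:ℝ))) α, ← Real.rpow_mul hA.le]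
    have h2 : (-(1:ℝ) / α) * α = -1 := by field_simp
    rw [h1, h2, Real.rpow_neg_one]
    exact mul_inv_cancel₀ hA.ne'
  set f : ℝ → ℝ := fun S => Real.exp (-S / b) / (1 - A * S ^ α) with hf_def
  have hf : ∀ v : ℝ, (σ * Real.exp v) * f (σ * Real.exp v) = phi σ k α v := by
    intro v
    have e1 : -(σ * Real.exp v) / b = -(k * Real.exp v) := by
      rw [hk_def]; field_simp
    have e2 : A * (σ * Real.exp v) ^ α = Real.exp ((α:ℝ) * v) := by
      rw [mul_pow, ← mul_assoc, hAσ, one_mul, ← Real.exp_nat_mul]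
    simp only [hf_def, phi]
    rw [e1, e2]
  set L := ∫ v in Set.Ioi 0, psi σ k α v with hL_def
  refine ⟨L, integral_psi_pos hσ hk hα, ?_⟩
  have hev : ∀ᶠ ε in nhdsWithin (0:ℝ) (Set.Ioi 0), ε ∈ Set.Ioo (0:ℝ) (1/2) :=
    Ioo_mem_nhdsGT_of_mem (by constructor <;> norm_num)
  -- the key identity
  have key : ∀ ε ∈ Set.Ioo (0:ℝ) (1/2),
      ((∫ S in (0:ℝ)..((1 - ε) * σ), f S) + ∫ S in Set.Ioi ((1 + ε) * σ), f S)
      = (∫ v in Set.Ioi (Real.log (1 + ε)), psi σ k α v)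
        - ∫ v in Set.Ioc (Real.log (1 + ε)) (-Real.log (1 - ε)), phi σ k α (-v) := by
    rintro ε ⟨hε0, hε2⟩
    have h1ε : (0:ℝ) < 1 - ε := by linarith
    have h1ε' : (0:ℝ) < 1 + ε := by linarith
    set v₁ := -Real.log (1 - ε) with hv₁
    set v₂ := Real.log (1 + ε) with hv₂
    have hEv₁ : Real.exp (-v₁) = 1 - ε := by rw [hv₁, neg_neg, Real.exp_log h1ε]
    have hEv₂ : Real.exp v₂ = 1 + ε := by rw [hv₂, Real.exp_log h1ε']
    have hv₂0 : 0 < v₂ := Real.log_pos (by linarith)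
    have hv₁0 : 0 < v₁ := by
      rw [hv₁, neg_pos]
      exact Real.log_neg h1ε (by linarith)
    have hv21 : v₂ ≤ v₁ := by
      have hmul := Real.log_mul h1ε'.ne' h1ε.ne'
      have hle : Real.log ((1 + ε) * (1 - ε)) ≤ 0 :=
        Real.log_nonpos (by nlinarith) (by nlinarith)
      rw [hmul] at hle
      rw [hv₁, hv₂]; linarith
    have hminus : (∫ S in (0:ℝ)..((1 - ε) * σ), f S)
        = ∫ v in Set.Ioi v₁, phi σ k α (-v) := by
      rw [intervalIntegral.integral_of_le (by positivity), integral_Ioc_eq_integral_Ioo,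
        show (1 - ε) * σ = σ * Real.exp (-v₁) by rw [hEv₁]; ring, sub_minus hσ f v₁]
      exact setIntegral_congr_fun measurableSet_Ioi fun v _ => hf (-v)
    have hplus : (∫ S in Set.Ioi ((1 + ε) * σ), f S)
        = ∫ v in Set.Ioi v₂, phi σ k α v := by
      rw [show (1 + ε) * σ = σ * Real.exp v₂ by rw [hEv₂]; ring, sub_plus hσ f v₂]
      exact setIntegral_congr_fun measurableSet_Ioi fun v _ => hf v
    have hsplitM : (∫ v in Set.Ioi v₂, phi σ k α (-v))
        = (∫ v in Set.Ioc v₂ v₁, phi σ k α (-v)) + ∫ v in Set.Ioi v₁, phi σ k α (-v) := by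
      rw [← setIntegral_union (Set.Ioc_disjoint_Ioi le_rfl) measurableSet_Ioi
        ((intM hσ hk hα hv₂0).mono_set Set.Ioc_subset_Ioi_self) (intM hσ hk hα hv₁0),
        Set.Ioc_union_Ioi_eq_Ioi hv21]
    have haddM : (∫ v in Set.Ioi v₂, psi σ k α v)
        = (∫ v in Set.Ioi v₂, phi σ k α (-v)) + ∫ v in Set.Ioi v₂, phi σ k α v := by
      rw [← integral_add (intM hσ hk hα hv₂0) (intP hσ hk hα hv₂0)]
      rfl
    rw [hminus, hplus]
    linarith
  -- limit of the main part
  have hI : Tendsto (fun ε : ℝ => ∫ v in Set.Ioi (Real.log (1 + ε)), psi σ k α v)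
      (nhdsWithin 0 (Set.Ioi 0)) (nhds L) := by
    have hlog : Tendsto (fun ε : ℝ => Real.log (1 + ε)) (nhdsWithin 0 (Set.Ioi 0))
        (nhdsWithin 0 (Set.Ioi 0)) := by
      apply tendsto_nhdsWithin_of_tendsto_nhds_of_eventually_within
      · have hcont : ContinuousAt (fun ε : ℝ => Real.log (1 + ε)) 0 :=
          (Real.continuousAt_log (by norm_num)).comp (by fun_prop)
        have h := hcont.tendsto
        simp only [add_zero, Real.log_one] at h
        exact h.mono_left nhdsWithin_le_nhds
      · filter_upwards [self_mem_nhdsWithin] with ε hε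
        exact Real.log_pos (by linarith [Set.mem_Ioi.mp hε])
    exact (tendsto_tail hσ hk hα).comp hlog
  -- the error term tends to zero
  have herr : Tendsto (fun ε : ℝ =>
      ∫ v in Set.Ioc (Real.log (1 + ε)) (-Real.log (1 - ε)), phi σ k α (-v))
      (nhdsWithin 0 (Set.Ioi 0)) (nhds 0) := by
    apply squeeze_zero_norm' (a := fun ε : ℝ => (4 * σ * (1 + α) / α) * ε)
    · filter_upwards [hev] with ε hε
      obtain ⟨hε0, hε2⟩ := hε
      have h1ε : (0:ℝ) < 1 - ε := by linarith
      have h1ε' : (0:ℝ) < 1 + ε := by linarith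
      set v₁ := -Real.log (1 - ε) with hv₁
      set v₂ := Real.log (1 + ε) with hv₂
      have hv₂0 : 0 < v₂ := Real.log_pos (by linarith)
      have hv21 : v₂ ≤ v₁ := by
        have hmul := Real.log_mul h1ε'.ne' h1ε.ne'
        have hle : Real.log ((1 + ε) * (1 - ε)) ≤ 0 :=
          Real.log_nonpos (by nlinarith) (by nlinarith)
        rw [hmul] at hle
        rw [hv₁, hv₂]; linarith
      have hv₁1 : v₁ ≤ 1 := by
        have h2e : (2:ℝ) ≤ Real.exp 1 := by linarith [Real.add_one_le_exp (1:ℝ)]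
        have hinv : Real.exp (-1) ≤ 1 - ε := by
          rw [Real.exp_neg]
          have : (Real.exp 1)⁻¹ ≤ 2⁻¹ := by
            apply inv_anti₀ (by norm_num) h2e
          have h12 : (2:ℝ)⁻¹ ≤ 1 - ε := by norm_num; linarith
          linarith
        have := (Real.le_log_iff_exp_le h1ε).mpr hinv
        rw [hv₁]; linarith
      have hv₂1 : v₂ ≤ 1 := hv21.trans hv₁1
      -- pointwise bound on the integrand
      set C := σ * (1 + (α:ℝ)) / ((α:ℝ) * v₂) with hC
      have hpt : ∀ v ∈ Set.Ioc v₂ v₁, ‖phi σ k α (-v)‖ ≤ C := by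
        intro v hv
        have hv0 : 0 < v := hv₂0.trans hv.1
        have hav : (α:ℝ) * -v = -((α:ℝ) * v) := by ring
        have hdv : 0 < 1 - Real.exp (-((α:ℝ) * v)) := den_pos hα hv0
        have hX : Real.exp (-(k * Real.exp (-v))) ≤ 1 :=
          Real.exp_le_one_iff.mpr (by nlinarith [Real.exp_pos (-v)])
        have hEv : Real.exp (-v) ≤ 1 := Real.exp_le_one_iff.mpr (by linarith)
        have hDlow : (α:ℝ) * v₂ / (1 + α) ≤ 1 - Real.exp (-((α:ℝ) * v)) := by
          have s1 : (α:ℝ) * v₂ / (1 + α) ≤ (α:ℝ) * v₂ / (1 + (α:ℝ) * v₂) := by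
            apply div_le_div_of_nonneg_left (by positivity) (by positivity)
            nlinarith
          have s2 := one_sub_exp_neg_ge (by positivity : (0:ℝ) ≤ (α:ℝ) * v₂)
          have s3 : Real.exp (-((α:ℝ) * v)) ≤ Real.exp (-((α:ℝ) * v₂)) := by
            apply Real.exp_le_exp.mpr
            nlinarith [hv.1]
          linarith
        have hnn : 0 ≤ phi σ k α (-v) := by
          rw [phi, hav]
          exact mul_nonneg (by positivity) (div_nonneg (Real.exp_pos _).le hdv.le)
        rw [Real.norm_eq_abs, abs_of_nonneg hnn, phi, hav]
        have hq : Real.exp (-(k * Real.exp (-v))) / (1 - Real.exp (-((α:ℝ) * v)))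
            ≤ 1 / ((α:ℝ) * v₂ / (1 + α)) :=
          div_le_div₀ zero_le_one hX (by positivity) hDlow
        calc σ * Real.exp (-v) * (Real.exp (-(k * Real.exp (-v))) /
              (1 - Real.exp (-((α:ℝ) * v))))
            ≤ σ * 1 * (1 / ((α:ℝ) * v₂ / (1 + α))) := by
              apply mul_le_mul (mul_le_mul_of_nonneg_left hEv hσ.le) hq
                (div_nonneg (Real.exp_pos _).le hdv.le) (by positivity)
          _ = C := by rw [hC]; field_simp
      have hmeas : AEStronglyMeasurable (fun v => phi σ k α (-v))
          (volume.restrict (Set.Ioc v₂ v₁)) := by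
        apply ((contM hα).mono _).aestronglyMeasurable measurableSet_Ioc
        intro v hv
        exact hv₂0.trans hv.1
      have hbnd := norm_setIntegral_le_of_norm_le_const (μ := volume)
        (s := Set.Ioc v₂ v₁) measure_Ioc_lt_top hpt
      rw [measureReal_def, Real.volume_Ioc, ENNReal.toReal_ofReal (by linarith)] at hbnd
      -- quantitative bounds
      have hv12 : v₁ - v₂ ≤ 2 * ε ^ 2 := by
        have hpe : Real.exp (-(2 * ε ^ 2)) * Real.exp (2 * ε ^ 2) = 1 := by
          rw [← Real.exp_add]; simp
        have e1 : Real.exp (-(2 * ε ^ 2)) * (1 + 2 * ε ^ 2) ≤ 1 := by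
          nlinarith [mul_nonneg (sub_nonneg.2 (Real.add_one_le_exp (2 * ε ^ 2)))
            (Real.exp_pos (-(2 * ε ^ 2))).le, hpe]
        have e2 : Real.exp (-(2 * ε ^ 2)) ≤ 1 - ε ^ 2 := by
          have hq1 : (1:ℝ) ≤ (1 - ε ^ 2) * (1 + 2 * ε ^ 2) := by
            have hb2 : (0:ℝ) ≤ 1 - 2 * ε ^ 2 := by nlinarith
            nlinarith [mul_nonneg (sq_nonneg ε) hb2]
          have hq2 : (0:ℝ) < 1 + 2 * ε ^ 2 := by positivity
          nlinarith [e1, hq1, hq2]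
        have hlog_ge : -(2 * ε ^ 2) ≤ Real.log (1 - ε ^ 2) :=
          (Real.le_log_iff_exp_le (by nlinarith)).mpr e2
        have hmul := Real.log_mul h1ε.ne' h1ε'.ne'
        have h1e2 : (1 - ε) * (1 + ε) = 1 - ε ^ 2 := by ring
        rw [h1e2] at hmul
        rw [hv₁, hv₂]; linarith
      have hv2low : ε / 2 ≤ v₂ := by
        have hl := Real.log_le_sub_one_of_pos (show (0:ℝ) < (1 + ε)⁻¹ by positivity)
        rw [Real.log_inv] at hl
        have hinv : (1 + ε)⁻¹ * (1 + ε) = 1 := inv_mul_cancel₀ h1ε'.ne'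
        have : 1 - (1 + ε)⁻¹ ≤ Real.log (1 + ε) := by linarith
        have h2 : ε / 2 ≤ 1 - (1 + ε)⁻¹ := by nlinarith
        rw [hv₂]; linarith
      calc ‖∫ v in Set.Ioc v₂ v₁, phi σ k α (-v)‖ ≤ C * (v₁ - v₂) := hbnd
        _ ≤ (σ * (1 + (α:ℝ)) / ((α:ℝ) * (ε / 2))) * (2 * ε ^ 2) := by
            apply mul_le_mul _ hv12 (by linarith) (by positivity)
            rw [hC]
            apply div_le_div_of_nonneg_left (by positivity) (by positivity)
            nlinarith
        _ = (4 * σ * (1 + α) / α) * ε := by field_simp; ring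
    · have htends : Tendsto (fun ε : ℝ => (4 * σ * (1 + (α:ℝ)) / α) * ε) (nhds 0) (nhds 0) := by
        simpa using (continuous_mul_left (4 * σ * (1 + (α:ℝ)) / α)).tendsto (0:ℝ)
      exact htends.mono_left nhdsWithin_le_nhds
  apply Tendsto.congr' _ (by simpa using hI.sub herr)
  filter_upwards [hev] with ε hε using (key ε hε).symm
end

section
/- Let H_n denote the physicists' Hermite polynomials, defined by H_0 = 1, H_1(x) = 2x, and H_{n+1}(x) = 2x·H_n(x) − 2n·H_{n−1}(x) for n ≥ 1. Then for all natural numbers m and n, H_m(x)·H_n(x) = Σ_{k=0}^{min(m,n)} 2^k · k! · C(m,k) · C(n,k) · H_{m+n−2k}(x), as an identity of polynomials (equivalently, for every real x), where C(m,k) denotes the binomial coefficient. -/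
open Finset

/-- The physicists' Hermite polynomials (as real functions), defined by
`H_0 = 1`, `H_1(x) = 2x`, `H_{n+1}(x) = 2x·H_n(x) − 2n·H_{n−1}(x)`. -/
noncomputable def physHermite : ℕ → ℝ → ℝ
  | 0 => fun _ => 1
  | 1 => fun x => 2 * x
  | (n + 2) => fun x =>
      2 * x * physHermite (n + 1) x - 2 * (n + 1) * physHermite n x

lemma physHermite_succ_succ (n : ℕ) (x : ℝ) :
    physHermite (n + 2) x = 2 * x * physHermite (n + 1) x - 2 * ((n : ℝ) + 1) * physHermite n x := by
  simp [physHermite]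

noncomputable def Hz : ℤ → ℝ → ℝ := fun z x => if 0 ≤ z then physHermite z.toNat x else 0

lemma Hz_natCast (n : ℕ) (x : ℝ) : Hz (n : ℤ) x = physHermite n x := by
  simp [Hz]

lemma Hz_rec (j : ℤ) (hj : 0 ≤ j) (x : ℝ) :
    2 * x * Hz j x = Hz (j + 1) x + 2 * (j : ℝ) * Hz (j - 1) x := by
  obtain ⟨n, rfl⟩ := Int.eq_ofNat_of_zero_le hj
  cases n with
  | zero => simp [Hz, physHermite]
  | succ p =>
    have e1 : ((p + 1 : ℕ) : ℤ) + 1 = ((p + 2 : ℕ) : ℤ) := by push_cast; ring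
    have e2 : ((p + 1 : ℕ) : ℤ) - 1 = ((p : ℕ) : ℤ) := by push_cast; ring
    rw [e1, e2, Hz_natCast, Hz_natCast, Hz_natCast, physHermite_succ_succ]
    push_cast; ring

noncomputable def aC (M n k : ℕ) : ℝ :=
  2 ^ k * (k.factorial : ℝ) * (M.choose k : ℝ) * (n.choose k : ℝ)

lemma choose_succ_real (N j : ℕ) :
    ((j : ℝ) + 1) * (N.choose (j + 1) : ℝ) = (N.choose j : ℝ) * ((N : ℝ) - j) := by
  rcases le_or_gt j N with hj | hj
  · have h := Nat.choose_succ_right_eq N j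
    have h2 : (N.choose (j+1) : ℝ) * ((j:ℝ)+1) = (N.choose j : ℝ) * ((N - j : ℕ) : ℝ) := by
      exact_mod_cast h
    rw [Nat.cast_sub hj] at h2
    linarith
  · rw [Nat.choose_eq_zero_of_lt hj, Nat.choose_eq_zero_of_lt (by omega)]
    simp

lemma succ_mul_choose_real (m j : ℕ) :
    ((m : ℝ) + 1) * (m.choose j : ℝ) = ((j : ℝ) + 1) * ((m+1).choose (j+1) : ℝ) := by
  have h := Nat.add_one_mul_choose_eq m j
  have h2 : ((m:ℝ)+1) * (m.choose j : ℝ) = ((m+1).choose (j+1) : ℝ) * ((j:ℝ)+1) := by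
    exact_mod_cast h
  linarith

lemma star (m n j : ℕ) :
    aC (m+2) n (j+1) =
      aC (m+1) n (j+1) + aC (m+1) n j * (2 * ((m:ℝ) + 1 + n - 2*j))
        - 2 * ((m:ℝ) + 1) * aC m n j := by
  have p1 : ((m+2).choose (j+1) : ℝ) = ((m+1).choose (j+1) : ℝ) + ((m+1).choose j : ℝ) := by
    rw [Nat.choose_succ_succ (m+1) j]; push_cast; ring
  have h1n := choose_succ_real n j
  have h1m := choose_succ_real (m+1) j
  have p2 := succ_mul_choose_real m j
  push_cast at h1m p2
  simp only [aC, Nat.factorial_succ, p1]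
  push_cast
  linear_combination (2^(j+1) * (j.factorial : ℝ) * ((m+1).choose j : ℝ)) * h1n
    + (2^(j+1) * (j.factorial : ℝ) * (n.choose j : ℝ)) * p2
    + (2^(j+1) * (j.factorial : ℝ) * (n.choose j : ℝ)) * h1m

theorem aux (n : ℕ) (x : ℝ) : ∀ m : ℕ,
    physHermite m x * physHermite n x =
      ∑ k ∈ range (m + 1), aC m n k * Hz ((m : ℤ) + n - 2 * k) x := by
  intro m
  induction m using Nat.twoStepInduction with
  | zero =>
    simp [physHermite, aC, Hz_natCast]
  | one =>
    have h := Hz_rec (n : ℤ) (by positivity) x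
    rw [Hz_natCast] at h
    have e : (n:ℤ) + 1 = ((n+1 : ℕ) : ℤ) := by push_cast; ring
    rw [e, Hz_natCast] at h
    rw [Finset.sum_range_succ, Finset.sum_range_one]
    have e0 : ((1:ℕ):ℤ) + (n:ℤ) - 2*((0:ℕ):ℤ) = ((n+1 : ℕ) : ℤ) := by push_cast; ring
    have e1 : ((1:ℕ):ℤ) + (n:ℤ) - 2*((1:ℕ):ℤ) = (n:ℤ) - 1 := by push_cast; ring
    rw [e0, e1, Hz_natCast]
    have hH1 : physHermite 1 x = 2 * x := by simp [physHermite]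
    rw [hH1, h]
    simp [aC]
  | more m IH0 IH1 =>
    have hmul : physHermite (m+2) x * physHermite n x
        = 2*x*(physHermite (m+1) x * physHermite n x)
          - 2*((m:ℝ)+1)*(physHermite m x * physHermite n x) := by
      rw [physHermite_succ_succ]; ring
    rw [hmul, IH1, IH0]
    -- abbreviations
    set b : ℕ → ℝ := fun k =>
      aC (m+1) n k * (2*((m:ℝ)+1+(n:ℝ)-2*(k:ℝ))) * Hz ((m:ℤ) + n - 2*k) x with hbdef
    set c : ℕ → ℝ := fun k =>
      2*((m:ℝ)+1) * (aC m n k * Hz ((m:ℤ) + n - 2*k) x) with hcdef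
    have hsplit : ∀ k ∈ range (m+2),
        2*x*(aC (m+1) n k * Hz (((m+1:ℕ) : ℤ) + n - 2*k) x)
          = aC (m+1) n k * Hz (((m+2:ℕ) : ℤ) + n - 2*k) x + b k := by
      intro k hk
      rw [Finset.mem_range] at hk
      by_cases hkn : k ≤ n
      · have hj : (0:ℤ) ≤ ((m+1:ℕ):ℤ) + n - 2*k := by push_cast; omega
        have hrec := Hz_rec _ hj x
        have e1 : ((m+1:ℕ):ℤ) + n - 2*k + 1 = ((m+2:ℕ):ℤ) + n - 2*k := by push_cast; ring
        have e2 : ((m+1:ℕ):ℤ) + n - 2*k - 1 = ((m:ℕ):ℤ) + n - 2*k := by push_cast; ring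
        have e3 : ((((m+1:ℕ):ℤ) + n - 2*k : ℤ) : ℝ) = (m:ℝ)+1+(n:ℝ)-2*(k:ℝ) := by
          push_cast; ring
        rw [e1, e2, e3] at hrec
        calc 2*x*(aC (m+1) n k * Hz (((m+1:ℕ):ℤ) + n - 2*k) x)
            = aC (m+1) n k * (2*x*Hz (((m+1:ℕ):ℤ) + n - 2*k) x) := by ring
          _ = aC (m+1) n k * Hz (((m+2:ℕ):ℤ) + n - 2*k) x + b k := by
              rw [hrec, hbdef]; ring
      · have h0 : n.choose k = 0 := Nat.choose_eq_zero_of_lt (by omega)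
        simp [aC, hbdef, h0]
    have hA : 2*x*(∑ k ∈ range (m+1+1), aC (m+1) n k * Hz (((m+1:ℕ):ℤ) + n - 2*k) x)
        = (∑ k ∈ range (m+2), aC (m+1) n k * Hz (((m+2:ℕ):ℤ) + n - 2*k) x)
          + ∑ k ∈ range (m+2), b k := by
      rw [Finset.mul_sum, Finset.sum_congr rfl hsplit, Finset.sum_add_distrib]
    rw [hA]
    -- extend the A-sum to range (m+3)
    have hA2 : ∑ k ∈ range (m+3), aC (m+1) n k * Hz (((m+2:ℕ):ℤ) + n - 2*k) x
        = ∑ k ∈ range (m+2), aC (m+1) n k * Hz (((m+2:ℕ):ℤ) + n - 2*k) x := by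
      rw [Finset.sum_range_succ]
      have : (m+1).choose (m+2) = 0 := Nat.choose_eq_zero_of_lt (by omega)
      simp [aC, this]
    -- shifted b-sum
    have hB : ∑ k ∈ range (m+3), (if k = 0 then 0 else b (k-1))
        = ∑ k ∈ range (m+2), b k := by
      rw [Finset.sum_range_succ']
      simp
    -- c-sum
    have hC1 : ∑ k ∈ range (m+2), c k
        = 2*((m:ℝ)+1)*(∑ k ∈ range (m+1), aC m n k * Hz ((m:ℤ) + n - 2*k) x) := by
      have h0 : m.choose (m+1) = 0 := Nat.choose_eq_zero_of_lt (by omega)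
      have hz : c (m+1) = 0 := by simp [hcdef, aC, h0]
      rw [Finset.sum_range_succ, hz, add_zero, Finset.mul_sum]
    have hC2 : ∑ k ∈ range (m+3), (if k = 0 then 0 else c (k-1))
        = ∑ k ∈ range (m+2), c k := by
      rw [Finset.sum_range_succ']
      simp
    rw [← hC1, ← hA2, ← hB, ← hC2]
    rw [← Finset.sum_add_distrib, ← Finset.sum_sub_distrib]
    apply (Finset.sum_congr rfl ?_).symm
    intro k hk
    rw [Finset.mem_range] at hk
    cases k with
    | zero => simp [aC]
    | succ j =>
      have eI : ((m+2:ℕ):ℤ) + n - 2*(j+1:ℕ) = (m:ℤ) + n - 2*j := by push_cast; ring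
      simp only [Nat.succ_ne_zero, if_false, Nat.add_sub_cancel]
      rw [eI, hbdef, hcdef]
      have hs := star m n j
      linear_combination (Hz ((m:ℤ) + n - 2*j) x) * hs

/-- Hermite linearization formula: for all naturals `m`, `n` and every real `x`,
`H_m(x)·H_n(x) = Σ_{k=0}^{min(m,n)} 2^k·k!·C(m,k)·C(n,k)·H_{m+n−2k}(x)`. -/
theorem physHermite_mul (m n : ℕ) (x : ℝ) :
    physHermite m x * physHermite n x =
      ∑ k ∈ range (min m n + 1),
        2 ^ k * (k.factorial : ℝ) * (m.choose k : ℝ) * (n.choose k : ℝ) *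
          physHermite (m + n - 2 * k) x := by
  rw [aux n x m]
  have hsub : range (min m n + 1) ⊆ range (m + 1) := by
    apply Finset.range_subset_range.2; omega
  rw [← Finset.sum_subset hsub (by
    intro k hk hk2
    rw [Finset.mem_range] at hk hk2
    have hn : n < k := by omega
    simp [aC, Nat.choose_eq_zero_of_lt hn])]
  apply Finset.sum_congr rfl
  intro k hk
  rw [Finset.mem_range] at hk
  have e : (m:ℤ) + n - 2*k = ((m + n - 2*k : ℕ) : ℤ) := by
    push_cast [Nat.cast_sub (by omega : 2*k ≤ m+n)]; ring
  rw [e, Hz_natCast]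
  simp only [aC]
end
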